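/- arXiv:1509.03837 — 5 statements merged into one kernel-verified Lean document; each statement's English description precedes it below -/
import Mathlib

section
/- Let N > 0, ℓ > 0, C₀ > 0, let ω : ℝ³ → ℝ be measurable with 0 ≤ ω(x) ≤ C₀/(N|x|) for all x ≠ 0 and ω(x) = 0 for |x| > ℓ, and let φ ∈ L⁴(ℝ³; ℂ). Then the kernel k(x,y) := −N ω(x−y) φ((x+y)/2)² belongs to L²(ℝ³×ℝ³) and ‖k‖_{L²(ℝ³×ℝ³)}² ≤ 4πℓ C₀² ‖φ‖_{L⁴(ℝ³)}⁴. -/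
open MeasureTheory Real
open scoped ENNReal

noncomputable section

abbrev E3 : Type := EuclideanSpace ℝ (Fin 3)

section Aux

open Set Metric

lemma aux_lintegral_comp_neg (f : E3 → ℝ≥0∞) (hf : Measurable f) :
    ∫⁻ x, f (-x) = ∫⁻ x, f x := by
  conv_rhs => rw [← Measure.map_neg_eq_self (volume : Measure E3)]
  rw [lintegral_map hf measurable_neg]

lemma aux_factorize (G H : E3 → ℝ≥0∞) (hG : Measurable G) (hH : Measurable H) :
    ∫⁻ p : E3 × E3, G (p.1 - p.2) * H ((2:ℝ)⁻¹ • (p.1 + p.2)) =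
      (∫⁻ u, G u) * (∫⁻ v, H v) := by
  have hGH : Measurable fun p : E3 × E3 => G (p.1 - p.2) * H ((2:ℝ)⁻¹ • (p.1 + p.2)) := by
    apply Measurable.mul
    · exact hG.comp (measurable_fst.sub measurable_snd)
    · exact hH.comp ((measurable_fst.add measurable_snd).const_smul (2:ℝ)⁻¹)
  rw [Measure.volume_eq_prod, lintegral_prod _ hGH.aemeasurable]
  have inner : ∀ x : E3, ∫⁻ y, G (x - y) * H ((2:ℝ)⁻¹ • (x + y)) =
      ∫⁻ z, G z * H (x - (2:ℝ)⁻¹ • z) := by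
    intro x
    have key : ∀ y : E3, G (x - y) * H ((2:ℝ)⁻¹ • (x + y)) =
        (fun z => G z * H (x - (2:ℝ)⁻¹ • z)) (x - y) := by
      intro y
      simp only []
      congr 2
      module
    simp_rw [key]
    set Φ : E3 → ℝ≥0∞ := fun z => G z * H (x - (2:ℝ)⁻¹ • z) with hΦ
    have hΦm : Measurable Φ :=
      (hG.mul (hH.comp (measurable_const.sub (measurable_id.const_smul (2:ℝ)⁻¹))))
    calc ∫⁻ y, Φ (x - y) = ∫⁻ y, (fun y => Φ (x + y)) (-y) := by
          simp_rw [sub_eq_add_neg]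
        _ = ∫⁻ y, Φ (x + y) :=
          aux_lintegral_comp_neg _ (hΦm.comp (measurable_const.add measurable_id))
        _ = ∫⁻ y, Φ y := lintegral_add_left_eq_self Φ x
  simp_rw [inner]
  rw [lintegral_lintegral_swap]
  · have : ∀ z : E3, ∫⁻ x, G z * H (x - (2:ℝ)⁻¹ • z) = G z * ∫⁻ v, H v := by
      intro z
      have hm : Measurable fun x : E3 => H (x - (2:ℝ)⁻¹ • z) :=
        hH.comp (measurable_id.sub measurable_const)
      rw [lintegral_const_mul _ hm, lintegral_sub_right_eq_self H _]
    simp_rw [this]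
    exact lintegral_mul_const _ hG
  · exact ((hG.comp measurable_snd).mul
      (hH.comp (measurable_fst.sub (measurable_snd.const_smul (2:ℝ)⁻¹)))).aemeasurable

lemma aux_lintegral_norm_E3 (f : ℝ → ℝ≥0∞) (hf : Measurable f) :
    ∫⁻ x : E3, f ‖x‖ =
      (volume : Measure E3).toSphere Set.univ *
        ∫⁻ y in Ioi (0:ℝ), ENNReal.ofReal (y ^ 2) * f y := by
  have hdim : Module.finrank ℝ E3 = 3 := by simp [finrank_euclideanSpace]
  have hm2 : Measurable fun p : sphere (0:E3) 1 × Ioi (0:ℝ) => f p.2.1 :=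
    hf.comp (measurable_subtype_coe.comp measurable_snd)
  calc ∫⁻ x : E3, f ‖x‖
      = ∫⁻ x in ({0}ᶜ : Set E3), f ‖x‖ := by rw [restrict_compl_singleton]
    _ = ∫⁻ x : ({0}ᶜ : Set E3), f ‖(x : E3)‖ ∂((volume : Measure E3).comap Subtype.val) := by
        rw [lintegral_subtype_comap (measurableSet_singleton (0:E3)).compl (fun x => f ‖x‖)]
    _ = ∫⁻ p : sphere (0:E3) 1 × Ioi (0:ℝ), f p.2.1
          ∂((volume : Measure E3).toSphere.prod
            (Measure.volumeIoiPow (Module.finrank ℝ E3 - 1))) :=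
        by rw [← (volume : Measure E3).measurePreserving_homeomorphUnitSphereProd.lintegral_comp hm2]
           refine lintegral_congr fun x => ?_
           simp [homeomorphUnitSphereProd, homeomorphSphereProd]
    _ = (volume : Measure E3).toSphere Set.univ *
          ∫⁻ r : Ioi (0:ℝ), f r.1 ∂(Measure.volumeIoiPow (Module.finrank ℝ E3 - 1)) := by
        rw [lintegral_prod (fun p : sphere (0:E3) 1 × Ioi (0:ℝ) => f p.2.1) hm2.aemeasurable]
        simp [lintegral_const, mul_comm]
    _ = (volume : Measure E3).toSphere Set.univ *
          ∫⁻ y in Ioi (0:ℝ), ENNReal.ofReal (y ^ 2) * f y := by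
        congr 1
        rw [Measure.volumeIoiPow,
          lintegral_withDensity_eq_lintegral_mul _
            (g := fun r : Ioi (0:ℝ) => f r.1)
            ((measurable_subtype_coe.pow_const _).ennreal_ofReal)
            (hf.comp measurable_subtype_coe), hdim,
          ← lintegral_subtype_comap measurableSet_Ioi (fun y => ENNReal.ofReal (y ^ 2) * f y)]
        rfl

lemma aux_volume_ball_E3 :
    (volume : Measure E3) (ball (0:E3) 1) = ENNReal.ofReal (4 * π / 3) := by
  rw [EuclideanSpace.volume_ball]
  have hcard : Fintype.card (Fin 3) = 3 := by simp
  rw [hcard]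
  have hγ : Real.Gamma ((3:ℝ) / 2 + 1) = 3 / 4 * Real.sqrt π := by
    rw [Real.Gamma_add_one (by norm_num)]
    have : (3:ℝ)/2 = 1/2 + 1 := by norm_num
    rw [this, Real.Gamma_add_one (by norm_num), Real.Gamma_one_half_eq]
    ring
  have hs : Real.sqrt π ^ 3 = π * Real.sqrt π := by
    have h2 : Real.sqrt π ^ 2 = π := Real.sq_sqrt pi_pos.le
    calc Real.sqrt π ^ 3 = Real.sqrt π ^ 2 * Real.sqrt π := by ring
      _ = π * Real.sqrt π := by rw [h2]
  have hne : Real.sqrt π ≠ 0 := by positivity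
  have : Real.sqrt π ^ 3 / Real.Gamma ((3:ℝ)/2 + 1) = 4 * π / 3 := by
    rw [hγ, hs]
    field_simp
  have h3 : ((3:ℕ):ℝ) / 2 + 1 = (3:ℝ)/2 + 1 := by norm_num
  rw [h3, this]
  simp

lemma aux_toSphere_univ_E3 :
    (volume : Measure E3).toSphere Set.univ = ENNReal.ofReal (4 * π) := by
  rw [Measure.toSphere_apply_univ, aux_volume_ball_E3]
  have hdim : Module.finrank ℝ E3 = 3 := by simp [finrank_euclideanSpace]
  rw [hdim]
  rw [← ENNReal.ofReal_natCast, ← ENNReal.ofReal_mul (by norm_num)]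
  norm_num
  ring_nf
  rw [show (3:ℝ≥0∞) = ENNReal.ofReal 3 by simp, show (4:ℝ≥0∞) = ENNReal.ofReal 4 by simp,
    ← ENNReal.ofReal_mul (by positivity), ← ENNReal.ofReal_mul pi_pos.le]
  ring_nf

end Aux

/-- Let `N > 0`, `ℓ > 0`, `C₀ > 0`, let `ω : ℝ³ → ℝ` be measurable with
`0 ≤ ω(x) ≤ C₀/(N|x|)` for `x ≠ 0` and `ω(x) = 0` for `|x| > ℓ`, and let `φ ∈ L⁴(ℝ³; ℂ)`.
Then the kernel `k(x,y) := −N ω(x−y) φ((x+y)/2)²` belongs to `L²(ℝ³×ℝ³)` and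
`‖k‖₂² ≤ 4πℓ C₀² ‖φ‖₄⁴`. -/
theorem stmt1 (N ℓ C₀ : ℝ) (hN : 0 < N) (hℓ : 0 < ℓ) (hC₀ : 0 < C₀)
    (ω : E3 → ℝ) (hωm : Measurable ω) (hω0 : ∀ x, 0 ≤ ω x)
    (hωb : ∀ x : E3, x ≠ 0 → ω x ≤ C₀ / (N * ‖x‖))
    (hωs : ∀ x : E3, ℓ < ‖x‖ → ω x = 0)
    (φ : E3 → ℂ) (hφ : MemLp φ 4 (volume : Measure E3)) :
    MemLp (fun p : E3 × E3 =>
        -(N : ℂ) * (ω (p.1 - p.2) : ℂ) * φ ((2 : ℝ)⁻¹ • (p.1 + p.2)) ^ 2) 2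
      (volume : Measure (E3 × E3)) ∧
    (∫ p : E3 × E3,
        ‖-(N : ℂ) * (ω (p.1 - p.2) : ℂ) * φ ((2 : ℝ)⁻¹ • (p.1 + p.2)) ^ 2‖ ^ 2)
      ≤ 4 * π * ℓ * C₀ ^ 2 * ∫ z : E3, ‖φ z‖ ^ 4 := by
  classical
  set L : E3 × E3 → E3 := fun p => (2:ℝ)⁻¹ • (p.1 + p.2) with hL
  have hLm : Measurable L := (measurable_fst.add measurable_snd).const_smul (2:ℝ)⁻¹
  -- measurable representative of φ
  have hφae : AEMeasurable φ (volume : Measure E3) := hφ.1.aemeasurable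
  set φ' : E3 → ℂ := hφae.mk φ with hφ'def
  have hφ'meas : Measurable φ' := hφae.measurable_mk
  have hφeq : φ =ᵐ[volume] φ' := hφae.ae_eq_mk
  -- basic measurable pieces
  set G : E3 → ℝ≥0∞ := fun u => ENNReal.ofReal ((N * ω u) ^ 2) with hGdef
  set Hf : E3 → ℝ≥0∞ := fun v => ENNReal.ofReal (‖φ' v‖ ^ 4) with hHdef
  have hGm : Measurable G := ((hωm.const_mul N).pow_const 2).ennreal_ofReal
  have hHm : Measurable Hf := ((hφ'meas.norm).pow_const 4).ennreal_ofReal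
  -- a.e. equality φ ∘ L = φ' ∘ L on the product space
  have hnull : ∀ᵐ p : E3 × E3, φ (L p) = φ' (L p) := by
    have hA : (volume : Measure E3) {v | φ v ≠ φ' v} = 0 := by
      exact ae_iff.mp hφeq
    obtain ⟨B, hAB, hBm, hB0⟩ := exists_measurable_superset_of_null hA
    have hpre : (volume : Measure (E3 × E3)) (L ⁻¹' B) = 0 := by
      have h1 : (volume : Measure (E3 × E3)) (L ⁻¹' B)
          = ∫⁻ p : E3 × E3, (1 : E3 → ℝ≥0∞) (p.1 - p.2) *
              B.indicator 1 ((2:ℝ)⁻¹ • (p.1 + p.2)) := by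
        rw [← lintegral_indicator_one (hLm hBm)]
        refine lintegral_congr fun p => ?_
        by_cases h : (2:ℝ)⁻¹ • (p.1 + p.2) ∈ B
        · rw [Set.indicator_of_mem (show p ∈ L ⁻¹' B from h), Set.indicator_of_mem h]
          simp
        · rw [Set.indicator_of_notMem (show p ∉ L ⁻¹' B from h),
            Set.indicator_of_notMem h]
          simp
      rw [h1, aux_factorize 1 (B.indicator 1) measurable_const
          (measurable_one.indicator hBm),
        lintegral_indicator_one hBm, hB0, mul_zero]
    refine measure_mono_null ?_ hpre
    intro p hp
    exact hAB (by simpa using hp)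
  -- the measurable kernel
  set k' : E3 × E3 → ℂ := fun p => -(N : ℂ) * (ω (p.1 - p.2) : ℂ) * φ' (L p) ^ 2 with hk'def
  have hk'm : Measurable k' := by
    refine Measurable.mul (Measurable.mul measurable_const ?_) ?_
    · exact Complex.measurable_ofReal.comp (hωm.comp (measurable_fst.sub measurable_snd))
    · exact (hφ'meas.comp hLm).pow_const 2
  have hkk' : (fun p : E3 × E3 =>
      -(N : ℂ) * (ω (p.1 - p.2) : ℂ) * φ ((2 : ℝ)⁻¹ • (p.1 + p.2)) ^ 2) =ᵐ[volume] k' := by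
    filter_upwards [hnull] with p hp
    simp only [hk'def, hL] at hp ⊢
    rw [hp]
  -- pointwise norm identity
  have hnorm : ∀ p : E3 × E3, ENNReal.ofReal (‖k' p‖ ^ 2) = G (p.1 - p.2) * Hf (L p) := by
    intro p
    have h1 : ‖k' p‖ = N * ω (p.1 - p.2) * ‖φ' (L p)‖ ^ 2 := by
      simp only [hk'def, norm_mul, norm_neg, norm_pow, Complex.norm_real, Real.norm_eq_abs,
        Complex.norm_natCast]
      rw [abs_of_pos hN, abs_of_nonneg (hω0 _)]
    have h2 : ‖k' p‖ ^ 2 = (N * ω (p.1 - p.2)) ^ 2 * ‖φ' (L p)‖ ^ 4 := by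
      rw [h1]; ring
    rw [h2, ENNReal.ofReal_mul (by positivity)]
  -- bound on ∫⁻ G
  have hGbound : (∫⁻ u, G u) ≤ ENNReal.ofReal (4 * π) *
      (ENNReal.ofReal (C₀ ^ 2) * ENNReal.ofReal ℓ) := by
    set f : ℝ → ℝ≥0∞ := fun y =>
      if y ≤ ℓ then ENNReal.ofReal (C₀ ^ 2 * (y ^ 2)⁻¹) else 0 with hfdef
    have hfm : Measurable f :=
      Measurable.ite measurableSet_Iic
        (((measurable_id.pow_const 2).inv.const_mul _).ennreal_ofReal) measurable_const
    have hae : ∀ᵐ x : E3, G x ≤ f ‖x‖ := by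
      have h0 : ∀ᵐ x : E3, x ∉ ({0} : Set E3) :=
        (Set.countable_singleton (0:E3)).ae_notMem volume
      filter_upwards [h0] with x hx
      have hxne : x ≠ 0 := by simpa using hx
      have hxpos : 0 < ‖x‖ := norm_pos_iff.mpr hxne
      by_cases hcase : ‖x‖ ≤ ℓ
      · have hb : N * ω x ≤ C₀ / ‖x‖ := by
          have := hωb x hxne
          calc N * ω x ≤ N * (C₀ / (N * ‖x‖)) := by
                exact mul_le_mul_of_nonneg_left this hN.le
            _ = C₀ / ‖x‖ := by field_simp
        have hsq : (N * ω x) ^ 2 ≤ C₀ ^ 2 * (‖x‖ ^ 2)⁻¹ := by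
          have h1 : (N * ω x) ^ 2 ≤ (C₀ / ‖x‖) ^ 2 :=
            pow_le_pow_left₀ (mul_nonneg hN.le (hω0 x)) hb 2
          calc (N * ω x) ^ 2 ≤ (C₀ / ‖x‖) ^ 2 := h1
            _ = C₀ ^ 2 * (‖x‖ ^ 2)⁻¹ := by rw [div_pow]; ring
        simp only [hfdef, hcase, if_true, hGdef]
        exact ENNReal.ofReal_le_ofReal hsq
      · push_neg at hcase
        have : ω x = 0 := hωs x hcase
        simp only [hGdef, this, mul_zero]
        simp
    calc (∫⁻ u, G u) ≤ ∫⁻ x : E3, f ‖x‖ := lintegral_mono_ae hae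
      _ = (volume : Measure E3).toSphere Set.univ *
            ∫⁻ y in Set.Ioi (0:ℝ), ENNReal.ofReal (y ^ 2) * f y := aux_lintegral_norm_E3 f hfm
      _ = ENNReal.ofReal (4 * π) * (ENNReal.ofReal (C₀ ^ 2) * ENNReal.ofReal ℓ) := by
          rw [aux_toSphere_univ_E3]
          congr 1
          have hcongr : ∫⁻ y in Set.Ioi (0:ℝ), ENNReal.ofReal (y ^ 2) * f y =
              ∫⁻ y in Set.Ioi (0:ℝ),
                (Set.Iic ℓ).indicator (fun _ => ENNReal.ofReal (C₀ ^ 2)) y := by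
            refine setLIntegral_congr_fun measurableSet_Ioi (fun y hy => ?_)
            have hy0 : 0 < y := hy
            by_cases hcase : y ≤ ℓ
            · simp only [hfdef, hcase, if_true, Set.indicator_of_mem (Set.mem_Iic.mpr hcase)]
              rw [← ENNReal.ofReal_mul (sq_nonneg y)]
              congr 1
              field_simp
            · have hnm : y ∉ Set.Iic ℓ := by simpa using hcase
              simp [hfdef, hcase, Set.indicator_of_notMem hnm]
          rw [hcongr, lintegral_indicator measurableSet_Iic,
            Measure.restrict_restrict measurableSet_Iic]
          rw [lintegral_const, Measure.restrict_apply MeasurableSet.univ, Set.univ_inter]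
          have : (Set.Iic ℓ ∩ Set.Ioi (0:ℝ)) = Set.Ioc 0 ℓ := by
            ext y; simp [Set.mem_Ioc, and_comm]
          rw [this, Real.volume_Ioc]
          simp
  -- integrability of ‖φ'‖⁴
  have hφ' : MemLp φ' 4 (volume : Measure E3) := hφ.ae_eq hφeq
  have hHf_eq : ∀ v, Hf v = ((‖φ' v‖₊ : ℝ≥0∞)) ^ (4:ℕ) := by
    intro v
    rw [hHdef]
    simp only []
    rw [ENNReal.ofReal_pow (norm_nonneg _), ofReal_norm_eq_enorm, enorm_eq_nnnorm]
  have hHlt : (∫⁻ v, Hf v) < ⊤ := by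
    have h4 := hφ'.2
    rw [eLpNorm_eq_lintegral_rpow_enorm_toReal (by norm_num) (by norm_num)] at h4
    have htoReal : (4 : ℝ≥0∞).toReal = (4:ℝ) := by simp
    rw [htoReal] at h4
    simp only [enorm_eq_nnnorm] at h4
    have h4' : (∫⁻ v, (‖φ' v‖₊ : ℝ≥0∞) ^ (4:ℝ)) < ⊤ := by
      by_contra hcon
      push_neg at hcon
      have : (∫⁻ v, (‖φ' v‖₊ : ℝ≥0∞) ^ (4:ℝ)) = ⊤ := top_le_iff.mp hcon
      rw [this] at h4
      simp [ENNReal.top_rpow_of_pos] at h4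
    have : (∫⁻ v, Hf v) = ∫⁻ v, (‖φ' v‖₊ : ℝ≥0∞) ^ (4:ℝ) := by
      refine lintegral_congr fun v => ?_
      rw [hHf_eq v, ← ENNReal.rpow_natCast]
      norm_num
    rw [this]
    exact h4'
  -- main lintegral identity and bound
  have hmain : (∫⁻ p : E3 × E3, ENNReal.ofReal (‖k' p‖ ^ 2))
      = (∫⁻ u, G u) * (∫⁻ v, Hf v) := by
    rw [← aux_factorize G Hf hGm hHm]
    exact lintegral_congr fun p => hnorm p
  set K : ℝ≥0∞ := ENNReal.ofReal (4 * π) * (ENNReal.ofReal (C₀ ^ 2) * ENNReal.ofReal ℓ)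
    with hKdef
  have hbound : (∫⁻ p : E3 × E3, ENNReal.ofReal (‖k' p‖ ^ 2)) ≤ K * ∫⁻ v, Hf v := by
    rw [hmain]
    exact mul_le_mul_left hGbound _
  have hKne : K ≠ ⊤ := by
    simp [hKdef, ENNReal.mul_ne_top, ENNReal.ofReal_ne_top]
  have hRHSne : K * (∫⁻ v, Hf v) ≠ ⊤ := ENNReal.mul_ne_top hKne hHlt.ne
  have hIlt : (∫⁻ p : E3 × E3, ENNReal.ofReal (‖k' p‖ ^ 2)) < ⊤ :=
    lt_of_le_of_lt hbound (lt_of_le_of_ne le_top hRHSne)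
  -- MemLp
  have hk'mem : MemLp k' 2 (volume : Measure (E3 × E3)) := by
    refine ⟨hk'm.aestronglyMeasurable, ?_⟩
    rw [eLpNorm_eq_lintegral_rpow_enorm_toReal (by norm_num) (by norm_num)]
    have htoReal : (2 : ℝ≥0∞).toReal = (2:ℝ) := by simp
    rw [htoReal]
    have heq : (∫⁻ p : E3 × E3, (‖k' p‖₊ : ℝ≥0∞) ^ (2:ℝ))
        = ∫⁻ p : E3 × E3, ENNReal.ofReal (‖k' p‖ ^ 2) := by
      refine lintegral_congr fun p => ?_
      rw [ENNReal.ofReal_pow (norm_nonneg _), ofReal_norm_eq_enorm, enorm_eq_nnnorm,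
        ← ENNReal.rpow_natCast]
      norm_num
    simp only [enorm_eq_nnnorm]
    rw [heq]
    exact ENNReal.rpow_lt_top_of_nonneg (by norm_num) hIlt.ne
  have hmem : MemLp (fun p : E3 × E3 =>
      -(N : ℂ) * (ω (p.1 - p.2) : ℂ) * φ ((2 : ℝ)⁻¹ • (p.1 + p.2)) ^ 2) 2
      (volume : Measure (E3 × E3)) := hk'mem.ae_eq hkk'.symm
  refine ⟨hmem, ?_⟩
  -- real integral conversions
  have hint_k : (∫ p : E3 × E3,
      ‖-(N : ℂ) * (ω (p.1 - p.2) : ℂ) * φ ((2 : ℝ)⁻¹ • (p.1 + p.2)) ^ 2‖ ^ 2)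
      = (∫⁻ p : E3 × E3, ENNReal.ofReal (‖k' p‖ ^ 2)).toReal := by
    have h1 : (∫ p : E3 × E3,
        ‖-(N : ℂ) * (ω (p.1 - p.2) : ℂ) * φ ((2 : ℝ)⁻¹ • (p.1 + p.2)) ^ 2‖ ^ 2)
        = ∫ p : E3 × E3, ‖k' p‖ ^ 2 := by
      refine integral_congr_ae ?_
      filter_upwards [hkk'] with p hp
      rw [hp]
    rw [h1, integral_eq_lintegral_of_nonneg_ae (ae_of_all _ fun p => by positivity)
      ((hk'm.norm.pow_const 2).aestronglyMeasurable)]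
  have hint_φ : (∫ z : E3, ‖φ z‖ ^ 4) = (∫⁻ v, Hf v).toReal := by
    have h1 : (∫ z : E3, ‖φ z‖ ^ 4) = ∫ z : E3, ‖φ' z‖ ^ 4 := by
      refine integral_congr_ae ?_
      filter_upwards [hφeq] with z hz
      rw [hz]
    rw [h1, integral_eq_lintegral_of_nonneg_ae (ae_of_all _ fun z => by positivity)
      ((hφ'meas.norm.pow_const 4).aestronglyMeasurable)]
  rw [hint_k, hint_φ]
  have hfinal := ENNReal.toReal_mono hRHSne hbound
  rw [ENNReal.toReal_mul] at hfinal
  have hKtoReal : K.toReal = 4 * π * ℓ * C₀ ^ 2 := by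
    rw [hKdef]
    rw [ENNReal.toReal_mul, ENNReal.toReal_mul, ENNReal.toReal_ofReal (by positivity),
      ENNReal.toReal_ofReal (by positivity), ENNReal.toReal_ofReal hℓ.le]
    ring
  rw [hKtoReal] at hfinal
  exact hfinal
end
end

section
/- Let k, k', f, f' ∈ L²(ℝ³×ℝ³; ℂ), and define g(x,z) := −(1/2) ∫_{ℝ³} [ k(x,y)(f(z,y)+f(y,z)) + conj(k(y,z))(f(x,y)+f(y,x)) ] dy and g' analogously with (k', f') in place of (k, f). Then g, g' ∈ L²(ℝ³×ℝ³) with ‖g‖₂ ≤ 2‖k‖₂‖f‖₂, one has ‖g' − g‖₂ ≤ 2( ‖k'−k‖₂‖f'‖₂ + ‖k‖₂‖f'−f‖₂ ), and the diagonal values satisfy ∫_{ℝ³} |g'(x,x) − g(x,x)| dx ≤ 2‖k'−k‖₂‖f'‖₂ + 2‖f'−f‖₂‖k‖₂. -/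
open MeasureTheory Real
open scoped ENNReal

noncomputable section

/-- The kernel `g(x,z) = −(1/2)∫ [k(x,y)(f(z,y)+f(y,z)) + conj(k(y,z))(f(x,y)+f(y,x))] dy`. -/
def recKer (k f : E3 × E3 → ℂ) : E3 × E3 → ℂ := fun p =>
  -(1 / 2 : ℂ) * ∫ y : E3,
    (k (p.1, y) * (f (p.2, y) + f (y, p.2))
      + starRingEnd ℂ (k (y, p.2)) * (f (p.1, y) + f (y, p.1)))

/-- The `L²(ℝ³×ℝ³)` norm of a kernel. -/
def l2n (h : E3 × E3 → ℂ) : ℝ := Real.sqrt (∫ p : E3 × E3, ‖h p‖ ^ 2)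

namespace Stmt8Aux

/-- squared-L² "mass" in `ℝ≥0∞`. -/
def Nsq (h : E3 × E3 → ℂ) : ℝ≥0∞ := ∫⁻ p : E3 × E3, (‖h p‖₊ : ℝ≥0∞) ^ 2

lemma hsq (x : ℝ≥0∞) : (x ^ (1/2 : ℝ)) ^ (2 : ℕ) = x := by
  rw [← ENNReal.rpow_natCast (x ^ (1/2 : ℝ)) 2, ← ENNReal.rpow_mul]
  norm_num

lemma two_conj : Real.HolderConjugate 2 2 := ⟨by norm_num, by norm_num, by norm_num⟩

lemma cs_nu {a b : E3 × E3 → ℝ≥0∞} (ha : AEMeasurable a (volume : Measure (E3 × E3)))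
    (hb : AEMeasurable b (volume : Measure (E3 × E3))) :
    ∫⁻ p : E3 × E3, a p * b p ≤
      (∫⁻ p : E3 × E3, a p ^ 2) ^ (1/2 : ℝ) * (∫⁻ p : E3 × E3, b p ^ 2) ^ (1/2 : ℝ) := by
  have h := ENNReal.lintegral_mul_le_Lp_mul_Lq (volume : Measure (E3 × E3)) two_conj ha hb
  simpa [show ((2:ℕ):ℝ) = (2:ℝ) by norm_num, ENNReal.rpow_natCast] using h

lemma schur {φ ψ : E3 × E3 → ℝ≥0∞} (hφ : Measurable φ) (hψ : Measurable ψ) :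
    ∫⁻ p : E3 × E3, (∫⁻ y : E3, φ (p.1, y) * ψ (p.2, y)) ^ (2:ℕ) ≤
      (∫⁻ q : E3 × E3, φ q ^ 2) * (∫⁻ q : E3 × E3, ψ q ^ 2) := by
  set A : E3 → ℝ≥0∞ := fun x => ∫⁻ y : E3, φ (x, y) ^ 2 with hA_def
  set B : E3 → ℝ≥0∞ := fun z => ∫⁻ y : E3, ψ (z, y) ^ 2 with hB_def
  have hA : Measurable A := (hφ.pow_const 2).lintegral_prod_right'
  have hB : Measurable B := (hψ.pow_const 2).lintegral_prod_right'
  have pointwise : ∀ p : E3 × E3,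
      (∫⁻ y : E3, φ (p.1, y) * ψ (p.2, y)) ^ (2:ℕ) ≤ A p.1 * B p.2 := by
    intro p
    have h := ENNReal.lintegral_mul_le_Lp_mul_Lq (volume : Measure E3) two_conj
      ((hφ.comp (measurable_prodMk_left (x := p.1))).aemeasurable)
      ((hψ.comp (measurable_prodMk_left (x := p.2))).aemeasurable)
    simp only [Function.comp] at h
    rw [show (2:ℝ) = ((2:ℕ):ℝ) by norm_num] at h
    simp_rw [ENNReal.rpow_natCast] at h
    calc (∫⁻ y : E3, φ (p.1, y) * ψ (p.2, y)) ^ (2:ℕ)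
        ≤ ((A p.1) ^ (1/((2:ℕ):ℝ)) * (B p.2) ^ (1/((2:ℕ):ℝ))) ^ (2:ℕ) :=
          pow_le_pow_left₀ zero_le h 2
      _ = A p.1 * B p.2 := by
          rw [mul_pow]
          norm_num [hsq]
  calc ∫⁻ p : E3 × E3, (∫⁻ y : E3, φ (p.1, y) * ψ (p.2, y)) ^ (2:ℕ)
      ≤ ∫⁻ p : E3 × E3, A p.1 * B p.2 := lintegral_mono pointwise
    _ = (∫⁻ x : E3, A x) * (∫⁻ z : E3, B z) := by
        rw [MeasureTheory.Measure.volume_eq_prod E3 E3]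
        exact MeasureTheory.lintegral_prod_mul hA.aemeasurable hB.aemeasurable
    _ = (∫⁻ q : E3 × E3, φ q ^ 2) * (∫⁻ q : E3 × E3, ψ q ^ 2) := by
        rw [show (∫⁻ q : E3 × E3, φ q ^ 2) = ∫⁻ x : E3, A x by
            rw [MeasureTheory.Measure.volume_eq_prod E3 E3,
              MeasureTheory.lintegral_prod _ (hφ.pow_const 2).aemeasurable],
          show (∫⁻ q : E3 × E3, ψ q ^ 2) = ∫⁻ z : E3, B z by
            rw [MeasureTheory.Measure.volume_eq_prod E3 E3,
              MeasureTheory.lintegral_prod _ (hψ.pow_const 2).aemeasurable]]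

lemma lint_swap (F : E3 × E3 → ℝ≥0∞) :
    ∫⁻ p : E3 × E3, F (p.2, p.1) = ∫⁻ p : E3 × E3, F p := by
  rw [MeasureTheory.Measure.volume_eq_prod E3 E3]
  exact MeasureTheory.lintegral_prod_swap F




/-- the pointwise majorant kernel -/
def W (a b : E3 × E3 → ℂ) (p : E3 × E3) (y : E3) : ℝ≥0∞ :=
  (‖a (p.1, y)‖₊ : ℝ≥0∞) * ((‖b (p.2, y)‖₊ : ℝ≥0∞) + (‖b (y, p.2)‖₊ : ℝ≥0∞))
    + (‖a (y, p.2)‖₊ : ℝ≥0∞) * ((‖b (p.1, y)‖₊ : ℝ≥0∞) + (‖b (y, p.1)‖₊ : ℝ≥0∞))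

set_option maxHeartbeats 1000000 in
lemma measurable_W {a b : E3 × E3 → ℂ} (ha : Measurable a) (hb : Measurable b) :
    Measurable (fun q : (E3 × E3) × E3 => W a b q.1 q.2) := by
  unfold W
  have m1 : Measurable fun q : (E3 × E3) × E3 => (q.1.1, q.2) :=
    (measurable_fst.fst).prodMk measurable_snd
  have m2 : Measurable fun q : (E3 × E3) × E3 => (q.1.2, q.2) :=
    (measurable_fst.snd).prodMk measurable_snd
  have m3 : Measurable fun q : (E3 × E3) × E3 => (q.2, q.1.2) :=
    measurable_snd.prodMk (measurable_fst.snd)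
  have m4 : Measurable fun q : (E3 × E3) × E3 => (q.2, q.1.1) :=
    measurable_snd.prodMk (measurable_fst.fst)
  exact (((ha.comp m1).enorm).mul
      (((hb.comp m2).enorm).add ((hb.comp m3).enorm))).add
    (((ha.comp m3).enorm).mul
      (((hb.comp m1).enorm).add ((hb.comp m4).enorm)))

lemma measurable_W_slice {a b : E3 × E3 → ℂ} (ha : Measurable a) (hb : Measurable b)
    (p : E3 × E3) : Measurable (fun y => W a b p y) := by
  have h2 : (fun y => W a b p y)
      = (fun q : (E3 × E3) × E3 => W a b q.1 q.2) ∘ (fun y : E3 => (p, y)) := rfl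
  rw [h2]
  exact (measurable_W ha hb).comp (measurable_prodMk_left (x := p))

/-- the majorant integral -/
def U (a b : E3 × E3 → ℂ) (p : E3 × E3) : ℝ≥0∞ := ∫⁻ y : E3, W a b p y

lemma measurable_U {a b : E3 × E3 → ℂ} (ha : Measurable a) (hb : Measurable b) :
    Measurable (U a b) :=
  (measurable_W ha hb).lintegral_prod_right'

lemma mink {u v : E3 × E3 → ℝ≥0∞} (hu : AEMeasurable u (volume : Measure (E3 × E3)))
    (hv : AEMeasurable v (volume : Measure (E3 × E3))) :
    (∫⁻ p : E3 × E3, (u p + v p) ^ (2:ℕ)) ^ (1/2 : ℝ) ≤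
      (∫⁻ p : E3 × E3, u p ^ (2:ℕ)) ^ (1/2 : ℝ) + (∫⁻ p : E3 × E3, v p ^ (2:ℕ)) ^ (1/2 : ℝ) := by
  have h := ENNReal.lintegral_Lp_add_le hu hv (one_le_two (α := ℝ))
  rw [show (2:ℝ) = ((2:ℕ):ℝ) by norm_num] at h
  simp_rw [ENNReal.rpow_natCast] at h
  simpa using h


lemma sq_rpow_half (x y : ℝ≥0∞) (h : x ≤ y) : x ^ (1/2:ℝ) ≤ y ^ (1/2:ℝ) :=
  ENNReal.rpow_le_rpow h (by norm_num)

lemma mul_rpow_half (x y : ℝ≥0∞) : (x * y) ^ (1/2:ℝ) = x ^ (1/2:ℝ) * y ^ (1/2:ℝ) :=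
  ENNReal.mul_rpow_of_nonneg x y (by norm_num)

lemma U_eq_sum {a b : E3 × E3 → ℂ} (ha : Measurable a) (hb : Measurable b) (p : E3 × E3) :
    U a b p =
      ((∫⁻ y : E3, (‖a (p.1, y)‖₊ : ℝ≥0∞) * (‖b (p.2, y)‖₊ : ℝ≥0∞))
        + ∫⁻ y : E3, (‖a (p.1, y)‖₊ : ℝ≥0∞) * (‖b (y, p.2)‖₊ : ℝ≥0∞))
      + ((∫⁻ y : E3, (‖b (p.1, y)‖₊ : ℝ≥0∞) * (‖a (y, p.2)‖₊ : ℝ≥0∞))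
        + ∫⁻ y : E3, (‖b (y, p.1)‖₊ : ℝ≥0∞) * (‖a (y, p.2)‖₊ : ℝ≥0∞)) := by
  have ma1 : Measurable fun y : E3 => (‖a (p.1, y)‖₊ : ℝ≥0∞) :=
    (ha.comp (measurable_prodMk_left (x := p.1))).enorm
  have ma2 : Measurable fun y : E3 => (‖a (y, p.2)‖₊ : ℝ≥0∞) :=
    (ha.comp (measurable_id.prodMk measurable_const)).enorm
  have mb1 : Measurable fun y : E3 => (‖b (p.2, y)‖₊ : ℝ≥0∞) :=
    (hb.comp (measurable_prodMk_left (x := p.2))).enorm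
  have mb2 : Measurable fun y : E3 => (‖b (y, p.2)‖₊ : ℝ≥0∞) :=
    (hb.comp (measurable_id.prodMk measurable_const)).enorm
  have mb3 : Measurable fun y : E3 => (‖b (p.1, y)‖₊ : ℝ≥0∞) :=
    (hb.comp (measurable_prodMk_left (x := p.1))).enorm
  have mb4 : Measurable fun y : E3 => (‖b (y, p.1)‖₊ : ℝ≥0∞) :=
    (hb.comp (measurable_id.prodMk measurable_const)).enorm
  have hW : (fun y => W a b p y) = fun y =>
      ((‖a (p.1, y)‖₊ : ℝ≥0∞) * (‖b (p.2, y)‖₊ : ℝ≥0∞)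
        + (‖a (p.1, y)‖₊ : ℝ≥0∞) * (‖b (y, p.2)‖₊ : ℝ≥0∞))
      + ((‖b (p.1, y)‖₊ : ℝ≥0∞) * (‖a (y, p.2)‖₊ : ℝ≥0∞)
        + (‖b (y, p.1)‖₊ : ℝ≥0∞) * (‖a (y, p.2)‖₊ : ℝ≥0∞)) := by
    funext y; unfold W; ring
  unfold U
  rw [hW, lintegral_add_left ((ma1.fun_mul mb1).fun_add (ma1.fun_mul mb2)),
    lintegral_add_left (ma1.fun_mul mb1), lintegral_add_left (mb3.fun_mul ma2)]

lemma MbigS {a b : E3 × E3 → ℂ} (ha : Measurable a) (hb : Measurable b) :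
    (∫⁻ p : E3 × E3, U a b p ^ (2:ℕ)) ^ (1/2:ℝ) ≤
      4 * (Nsq a) ^ (1/2:ℝ) * (Nsq b) ^ (1/2:ℝ) := by
  set φa : E3 × E3 → ℝ≥0∞ := fun q => (‖a q‖₊ : ℝ≥0∞) with hφa
  set φas : E3 × E3 → ℝ≥0∞ := fun q => (‖a (q.2, q.1)‖₊ : ℝ≥0∞) with hφas
  set φb : E3 × E3 → ℝ≥0∞ := fun q => (‖b q‖₊ : ℝ≥0∞) with hφb
  set φbs : E3 × E3 → ℝ≥0∞ := fun q => (‖b (q.2, q.1)‖₊ : ℝ≥0∞) with hφbs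
  have mφa : Measurable φa := ha.enorm
  have mφas : Measurable φas := (ha.comp measurable_swap).enorm
  have mφb : Measurable φb := hb.enorm
  have mφbs : Measurable φbs := (hb.comp measurable_swap).enorm
  have Nas : ∫⁻ q : E3 × E3, φas q ^ 2 = Nsq a := lint_swap (fun q => φa q ^ 2)
  have Nbs : ∫⁻ q : E3 × E3, φbs q ^ 2 = Nsq b := lint_swap (fun q => φb q ^ 2)
  set S1 : E3 × E3 → ℝ≥0∞ := fun p => ∫⁻ y : E3, φa (p.1, y) * φb (p.2, y) with hS1
  set S2 : E3 × E3 → ℝ≥0∞ := fun p => ∫⁻ y : E3, φa (p.1, y) * φbs (p.2, y) with hS2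
  set S3 : E3 × E3 → ℝ≥0∞ := fun p => ∫⁻ y : E3, φb (p.1, y) * φas (p.2, y) with hS3
  set S4 : E3 × E3 → ℝ≥0∞ := fun p => ∫⁻ y : E3, φbs (p.1, y) * φas (p.2, y) with hS4
  have mS : ∀ (φ ψ : E3 × E3 → ℝ≥0∞), Measurable φ → Measurable ψ →
      Measurable (fun p : E3 × E3 => ∫⁻ y : E3, φ (p.1, y) * ψ (p.2, y)) := by
    intro φ ψ hφ hψ
    exact Measurable.lintegral_prod_right'
      ((hφ.comp ((measurable_fst.fst).prodMk measurable_snd)).mul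
        (hψ.comp ((measurable_fst.snd).prodMk measurable_snd)))
  have mS1 : Measurable S1 := mS _ _ mφa mφb
  have mS2 : Measurable S2 := mS _ _ mφa mφbs
  have mS3 : Measurable S3 := mS _ _ mφb mφas
  have mS4 : Measurable S4 := mS _ _ mφbs mφas
  have hU : ∀ p : E3 × E3, U a b p = (S1 p + S2 p) + (S3 p + S4 p) := by
    intro p
    rw [U_eq_sum ha hb p]
  have bS : ∀ (φ ψ : E3 × E3 → ℝ≥0∞), Measurable φ → Measurable ψ →
      (∫⁻ p : E3 × E3, (∫⁻ y : E3, φ (p.1, y) * ψ (p.2, y)) ^ (2:ℕ)) ^ (1/2:ℝ) ≤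
        (∫⁻ q : E3 × E3, φ q ^ 2) ^ (1/2:ℝ) * (∫⁻ q : E3 × E3, ψ q ^ 2) ^ (1/2:ℝ) := by
    intro φ ψ hφ hψ
    rw [← mul_rpow_half]
    exact sq_rpow_half _ _ (schur hφ hψ)
  have b1 : (∫⁻ p : E3 × E3, S1 p ^ (2:ℕ)) ^ (1/2:ℝ) ≤ Nsq a ^ (1/2:ℝ) * Nsq b ^ (1/2:ℝ) :=
    bS _ _ mφa mφb
  have b2 : (∫⁻ p : E3 × E3, S2 p ^ (2:ℕ)) ^ (1/2:ℝ) ≤ Nsq a ^ (1/2:ℝ) * Nsq b ^ (1/2:ℝ) := by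
    have := bS _ _ mφa mφbs
    rwa [Nbs] at this
  have b3 : (∫⁻ p : E3 × E3, S3 p ^ (2:ℕ)) ^ (1/2:ℝ) ≤ Nsq a ^ (1/2:ℝ) * Nsq b ^ (1/2:ℝ) := by
    have := bS _ _ mφb mφas
    rw [Nas] at this
    exact this.trans_eq (mul_comm _ _)
  have b4 : (∫⁻ p : E3 × E3, S4 p ^ (2:ℕ)) ^ (1/2:ℝ) ≤ Nsq a ^ (1/2:ℝ) * Nsq b ^ (1/2:ℝ) := by
    have := bS _ _ mφbs mφas
    rw [Nas, Nbs] at this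
    exact this.trans_eq (mul_comm _ _)
  calc (∫⁻ p : E3 × E3, U a b p ^ (2:ℕ)) ^ (1/2:ℝ)
      = (∫⁻ p : E3 × E3, ((S1 p + S2 p) + (S3 p + S4 p)) ^ (2:ℕ)) ^ (1/2:ℝ) := by
        congr 1; apply lintegral_congr; intro p; rw [hU p]
    _ ≤ (∫⁻ p : E3 × E3, (S1 p + S2 p) ^ (2:ℕ)) ^ (1/2:ℝ)
        + (∫⁻ p : E3 × E3, (S3 p + S4 p) ^ (2:ℕ)) ^ (1/2:ℝ) :=
        mink (mS1.add mS2).aemeasurable (mS3.add mS4).aemeasurable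
    _ ≤ ((∫⁻ p : E3 × E3, S1 p ^ (2:ℕ)) ^ (1/2:ℝ) + (∫⁻ p : E3 × E3, S2 p ^ (2:ℕ)) ^ (1/2:ℝ))
        + ((∫⁻ p : E3 × E3, S3 p ^ (2:ℕ)) ^ (1/2:ℝ)
          + (∫⁻ p : E3 × E3, S4 p ^ (2:ℕ)) ^ (1/2:ℝ)) :=
        add_le_add (mink mS1.aemeasurable mS2.aemeasurable)
          (mink mS3.aemeasurable mS4.aemeasurable)
    _ ≤ (Nsq a ^ (1/2:ℝ) * Nsq b ^ (1/2:ℝ) + Nsq a ^ (1/2:ℝ) * Nsq b ^ (1/2:ℝ))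
        + (Nsq a ^ (1/2:ℝ) * Nsq b ^ (1/2:ℝ) + Nsq a ^ (1/2:ℝ) * Nsq b ^ (1/2:ℝ)) :=
        add_le_add (add_le_add b1 b2) (add_le_add b3 b4)
    _ = 4 * (Nsq a) ^ (1/2:ℝ) * (Nsq b) ^ (1/2:ℝ) := by ring


lemma DbigS {a b : E3 × E3 → ℂ} (ha : Measurable a) (hb : Measurable b) :
    ∫⁻ x : E3, U a b (x, x) ≤ 4 * (Nsq a) ^ (1/2:ℝ) * (Nsq b) ^ (1/2:ℝ) := by
  have hGm : Measurable (fun q : E3 × E3 => W a b (q.1, q.1) q.2) := by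
    have h2 : (fun q : E3 × E3 => W a b (q.1, q.1) q.2)
        = (fun r : (E3 × E3) × E3 => W a b r.1 r.2)
          ∘ (fun q : E3 × E3 => ((q.1, q.1), q.2)) := rfl
    rw [h2]
    exact (measurable_W ha hb).comp
      ((measurable_fst.prodMk measurable_fst).prodMk measurable_snd)
  have key : ∫⁻ x : E3, U a b (x, x) = ∫⁻ q : E3 × E3, W a b (q.1, q.1) q.2 := by
    rw [MeasureTheory.Measure.volume_eq_prod E3 E3,
      MeasureTheory.lintegral_prod _ hGm.aemeasurable]
    rfl
  rw [key]
  have ma : Measurable fun q : E3 × E3 => (‖a q‖₊ : ℝ≥0∞) := ha.enorm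
  have mas : Measurable fun q : E3 × E3 => (‖a (q.2, q.1)‖₊ : ℝ≥0∞) :=
    (ha.comp measurable_swap).enorm
  have mb : Measurable fun q : E3 × E3 => (‖b q‖₊ : ℝ≥0∞) := hb.enorm
  have mbs : Measurable fun q : E3 × E3 => (‖b (q.2, q.1)‖₊ : ℝ≥0∞) :=
    (hb.comp measurable_swap).enorm
  have Nas : ∫⁻ q : E3 × E3, ((‖a (q.2, q.1)‖₊ : ℝ≥0∞)) ^ 2 = Nsq a :=
    lint_swap (fun q => (‖a q‖₊ : ℝ≥0∞) ^ 2)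
  have Nbs : ∫⁻ q : E3 × E3, ((‖b (q.2, q.1)‖₊ : ℝ≥0∞)) ^ 2 = Nsq b :=
    lint_swap (fun q => (‖b q‖₊ : ℝ≥0∞) ^ 2)
  have hWq : (fun q : E3 × E3 => W a b (q.1, q.1) q.2) = fun q =>
      ((‖a q‖₊ : ℝ≥0∞) * (‖b q‖₊ : ℝ≥0∞) + (‖a q‖₊ : ℝ≥0∞) * (‖b (q.2, q.1)‖₊ : ℝ≥0∞))
      + ((‖a (q.2, q.1)‖₊ : ℝ≥0∞) * (‖b q‖₊ : ℝ≥0∞)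
        + (‖a (q.2, q.1)‖₊ : ℝ≥0∞) * (‖b (q.2, q.1)‖₊ : ℝ≥0∞)) := by
    funext q
    show W a b (q.1, q.1) q.2 = _
    unfold W
    ring
  rw [hWq]
  rw [lintegral_add_left ((ma.fun_mul mb).fun_add (ma.fun_mul mbs)), lintegral_add_left (ma.fun_mul mb),
    lintegral_add_left (mas.fun_mul mb)]
  have c1 := cs_nu ma.aemeasurable mb.aemeasurable
  have c2 := cs_nu ma.aemeasurable mbs.aemeasurable
  have c3 := cs_nu mas.aemeasurable mb.aemeasurable
  have c4 := cs_nu mas.aemeasurable mbs.aemeasurable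
  rw [Nbs] at c2
  rw [Nas] at c3
  rw [Nas, Nbs] at c4
  calc _ ≤ (Nsq a ^ (1/2:ℝ) * Nsq b ^ (1/2:ℝ) + Nsq a ^ (1/2:ℝ) * Nsq b ^ (1/2:ℝ))
      + (Nsq a ^ (1/2:ℝ) * Nsq b ^ (1/2:ℝ) + Nsq a ^ (1/2:ℝ) * Nsq b ^ (1/2:ℝ)) :=
      add_le_add (add_le_add c1 c2) (add_le_add c3 c4)
    _ = 4 * (Nsq a) ^ (1/2:ℝ) * (Nsq b) ^ (1/2:ℝ) := by ring


lemma nnnorm_half : (‖(-(1/2) : ℂ)‖₊ : ℝ≥0∞) = 2⁻¹ := by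
  have : ‖(-(1/2) : ℂ)‖₊ = 1/2 := by
    rw [nnnorm_neg]
    ext
    simp
  rw [this]
  simp [ENNReal.coe_inv]

lemma integrand_le (a b : E3 × E3 → ℂ) (p : E3 × E3) (y : E3) :
    (‖a (p.1, y) * (b (p.2, y) + b (y, p.2))
      + starRingEnd ℂ (a (y, p.2)) * (b (p.1, y) + b (y, p.1))‖₊ : ℝ≥0∞) ≤ W a b p y := by
  have h : ‖a (p.1, y) * (b (p.2, y) + b (y, p.2))
      + starRingEnd ℂ (a (y, p.2)) * (b (p.1, y) + b (y, p.1))‖₊ ≤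
      ‖a (p.1, y)‖₊ * (‖b (p.2, y)‖₊ + ‖b (y, p.2)‖₊)
        + ‖a (y, p.2)‖₊ * (‖b (p.1, y)‖₊ + ‖b (y, p.1)‖₊) := by
    refine (nnnorm_add_le _ _).trans (add_le_add ?_ ?_)
    · rw [nnnorm_mul]
      exact mul_le_mul_right (nnnorm_add_le _ _) _
    · rw [nnnorm_mul, RCLike.nnnorm_conj]
      exact mul_le_mul_right (nnnorm_add_le _ _) _
  unfold W
  exact_mod_cast h

lemma pointwise_g (k f : E3 × E3 → ℂ) (p : E3 × E3) :
    (‖recKer k f p‖₊ : ℝ≥0∞) ≤ 2⁻¹ * U k f p := by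
  have h0 : recKer k f p = -(1/2 : ℂ) * ∫ y : E3,
      (k (p.1, y) * (f (p.2, y) + f (y, p.2))
        + starRingEnd ℂ (k (y, p.2)) * (f (p.1, y) + f (y, p.1))) := rfl
  rw [h0, nnnorm_mul, ENNReal.coe_mul, nnnorm_half]
  refine mul_le_mul_right ?_ _
  refine (enorm_integral_le_lintegral_enorm _).trans ?_
  exact lintegral_mono fun y => integrand_le k f p y

lemma enorm_integral_sub_le {h h' : E3 → ℂ}
    (hm : AEStronglyMeasurable h (volume : Measure E3))
    (hm' : AEStronglyMeasurable h' (volume : Measure E3)) :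
    (‖(∫ y : E3, h' y) - ∫ y : E3, h y‖₊ : ℝ≥0∞) ≤ ∫⁻ y : E3, (‖h' y - h y‖₊ : ℝ≥0∞) := by
  by_cases Hd : Integrable (fun y => h' y - h y) (volume : Measure E3)
  · by_cases H : Integrable h (volume : Measure E3)
    · have H' : Integrable h' (volume : Measure E3) := by
        refine (Hd.add H).congr (Filter.Eventually.of_forall fun y => ?_)
        simp only [Pi.add_apply]
        ring
      rw [← integral_sub H' H]
      exact enorm_integral_le_lintegral_enorm _
    · have H' : ¬ Integrable h' (volume : Measure E3) := by
        intro H'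
        refine H ((H'.sub Hd).congr (Filter.Eventually.of_forall fun y => ?_))
        simp only [Pi.sub_apply]
        ring
      rw [integral_undef H, integral_undef H']
      simp
  · have htop : ∫⁻ y : E3, (‖h' y - h y‖₊ : ℝ≥0∞) = ⊤ := by
      by_contra hfin
      exact Hd ⟨hm'.sub hm, lt_top_iff_ne_top.2 hfin⟩
    rw [htop]
    exact le_top

lemma measurable_h {k f : E3 × E3 → ℂ} (hk : Measurable k) (hf : Measurable f) (p : E3 × E3) :
    Measurable (fun y : E3 => k (p.1, y) * (f (p.2, y) + f (y, p.2))
      + starRingEnd ℂ (k (y, p.2)) * (f (p.1, y) + f (y, p.1))) := by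
  have m1 : Measurable fun y : E3 => k (p.1, y) := hk.comp (measurable_prodMk_left (x := p.1))
  have m2 : Measurable fun y : E3 => k (y, p.2) :=
    hk.comp (measurable_id.prodMk measurable_const)
  have m3 : Measurable fun y : E3 => f (p.2, y) := hf.comp (measurable_prodMk_left (x := p.2))
  have m4 : Measurable fun y : E3 => f (y, p.2) :=
    hf.comp (measurable_id.prodMk measurable_const)
  have m5 : Measurable fun y : E3 => f (p.1, y) := hf.comp (measurable_prodMk_left (x := p.1))
  have m6 : Measurable fun y : E3 => f (y, p.1) :=
    hf.comp (measurable_id.prodMk measurable_const)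
  have m2' : Measurable fun y : E3 => starRingEnd ℂ (k (y, p.2)) :=
    Complex.continuous_conj.measurable.comp m2
  exact (m1.mul (m3.add m4)).add (m2'.mul (m5.add m6))

lemma pointwise_d {k k' f f' : E3 × E3 → ℂ} (hk : Measurable k) (hk' : Measurable k')
    (hf : Measurable f) (hf' : Measurable f') (p : E3 × E3) :
    (‖recKer k' f' p - recKer k f p‖₊ : ℝ≥0∞) ≤
      2⁻¹ * (U (fun q => k' q - k q) f' p + U k (fun q => f' q - f q) p) := by
  set h : E3 → ℂ := fun y => k (p.1, y) * (f (p.2, y) + f (y, p.2))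
      + starRingEnd ℂ (k (y, p.2)) * (f (p.1, y) + f (y, p.1)) with hh
  set h' : E3 → ℂ := fun y => k' (p.1, y) * (f' (p.2, y) + f' (y, p.2))
      + starRingEnd ℂ (k' (y, p.2)) * (f' (p.1, y) + f' (y, p.1)) with hh'
  have step1 : recKer k' f' p - recKer k f p
      = -(1/2 : ℂ) * ((∫ y : E3, h' y) - ∫ y : E3, h y) := by
    show -(1/2 : ℂ) * (∫ y : E3, h' y) - -(1/2 : ℂ) * (∫ y : E3, h y) = _
    ring
  rw [step1, nnnorm_mul, ENNReal.coe_mul, nnnorm_half]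
  refine mul_le_mul_right ?_ _
  refine (enorm_integral_sub_le (measurable_h hk hf p).aestronglyMeasurable
    (measurable_h hk' hf' p).aestronglyMeasurable).trans ?_
  have pt : ∀ y : E3, (‖h' y - h y‖₊ : ℝ≥0∞) ≤
      W (fun q => k' q - k q) f' p y + W k (fun q => f' q - f q) p y := by
    intro y
    have e : h' y - h y =
        ((k' (p.1, y) - k (p.1, y)) * (f' (p.2, y) + f' (y, p.2))
          + starRingEnd ℂ (k' (y, p.2) - k (y, p.2)) * (f' (p.1, y) + f' (y, p.1)))
        + (k (p.1, y) * ((f' (p.2, y) - f (p.2, y)) + (f' (y, p.2) - f (y, p.2)))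
          + starRingEnd ℂ (k (y, p.2))
            * ((f' (p.1, y) - f (p.1, y)) + (f' (y, p.1) - f (y, p.1)))) := by
      simp only [hh, hh', map_sub]
      ring
    rw [e]
    refine le_trans ?_ (add_le_add (integrand_le (fun q => k' q - k q) f' p y)
      (integrand_le k (fun q => f' q - f q) p y))
    exact_mod_cast nnnorm_add_le _ _
  refine (lintegral_mono pt).trans ?_
  rw [lintegral_add_left (measurable_W_slice (hk'.fun_sub hk) hf' p)]
  exact le_rfl


lemma hsq' (x : ℝ≥0∞) : (x ^ (2:ℕ)) ^ (1/2 : ℝ) = x := by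
  rw [← ENNReal.rpow_natCast x 2, ← ENNReal.rpow_mul]
  norm_num

lemma half_four : (2⁻¹ : ℝ≥0∞) * 4 = 2 := by
  rw [show (4:ℝ≥0∞) = 2 * 2 by norm_num, ← mul_assoc,
    ENNReal.inv_mul_cancel two_ne_zero ENNReal.ofNat_ne_top, one_mul]

lemma const_mul_M (c : ℝ≥0∞) {u : E3 × E3 → ℝ≥0∞} (hu : Measurable u) :
    (∫⁻ p : E3 × E3, (c * u p) ^ (2:ℕ)) ^ (1/2:ℝ) = c * (∫⁻ p : E3 × E3, u p ^ (2:ℕ)) ^ (1/2:ℝ) := by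
  simp_rw [mul_pow]
  rw [lintegral_const_mul _ (hu.pow_const 2), mul_rpow_half, hsq']

lemma M_g_le {k f : E3 × E3 → ℂ} (hk : Measurable k) (hf : Measurable f) :
    (∫⁻ p : E3 × E3, (‖recKer k f p‖₊ : ℝ≥0∞) ^ (2:ℕ)) ^ (1/2:ℝ) ≤
      2 * (Nsq k) ^ (1/2:ℝ) * (Nsq f) ^ (1/2:ℝ) := by
  calc (∫⁻ p : E3 × E3, (‖recKer k f p‖₊ : ℝ≥0∞) ^ (2:ℕ)) ^ (1/2:ℝ)
      ≤ (∫⁻ p : E3 × E3, (2⁻¹ * U k f p) ^ (2:ℕ)) ^ (1/2:ℝ) :=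
        sq_rpow_half _ _ (lintegral_mono fun p =>
          pow_le_pow_left₀ zero_le (pointwise_g k f p) 2)
    _ = 2⁻¹ * (∫⁻ p : E3 × E3, U k f p ^ (2:ℕ)) ^ (1/2:ℝ) := const_mul_M _ (measurable_U hk hf)
    _ ≤ 2⁻¹ * (4 * (Nsq k) ^ (1/2:ℝ) * (Nsq f) ^ (1/2:ℝ)) := mul_le_mul_right (MbigS hk hf) _
    _ = 2 * (Nsq k) ^ (1/2:ℝ) * (Nsq f) ^ (1/2:ℝ) := by
        rw [mul_assoc (4:ℝ≥0∞), ← mul_assoc (2⁻¹:ℝ≥0∞), half_four, mul_assoc]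

lemma M_d_le {k k' f f' : E3 × E3 → ℂ} (hk : Measurable k) (hk' : Measurable k')
    (hf : Measurable f) (hf' : Measurable f') :
    (∫⁻ p : E3 × E3, (‖recKer k' f' p - recKer k f p‖₊ : ℝ≥0∞) ^ (2:ℕ)) ^ (1/2:ℝ) ≤
      2 * ((Nsq (fun q => k' q - k q)) ^ (1/2:ℝ) * (Nsq f') ^ (1/2:ℝ)
        + (Nsq k) ^ (1/2:ℝ) * (Nsq (fun q => f' q - f q)) ^ (1/2:ℝ)) := by
  have mU1 : Measurable (U (fun q => k' q - k q) f') := measurable_U (hk'.sub hk) hf'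
  have mU2 : Measurable (U k (fun q => f' q - f q)) := measurable_U hk (hf'.sub hf)
  calc (∫⁻ p : E3 × E3, (‖recKer k' f' p - recKer k f p‖₊ : ℝ≥0∞) ^ (2:ℕ)) ^ (1/2:ℝ)
      ≤ (∫⁻ p : E3 × E3,
          (2⁻¹ * (U (fun q => k' q - k q) f' p + U k (fun q => f' q - f q) p)) ^ (2:ℕ)) ^ (1/2:ℝ) :=
        sq_rpow_half _ _ (lintegral_mono fun p =>
          pow_le_pow_left₀ zero_le (pointwise_d hk hk' hf hf' p) 2)
    _ = 2⁻¹ * (∫⁻ p : E3 × E3,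
          (U (fun q => k' q - k q) f' p + U k (fun q => f' q - f q) p) ^ (2:ℕ)) ^ (1/2:ℝ) :=
        const_mul_M _ (mU1.add mU2)
    _ ≤ 2⁻¹ * ((∫⁻ p : E3 × E3, U (fun q => k' q - k q) f' p ^ (2:ℕ)) ^ (1/2:ℝ)
          + (∫⁻ p : E3 × E3, U k (fun q => f' q - f q) p ^ (2:ℕ)) ^ (1/2:ℝ)) :=
        mul_le_mul_right (mink mU1.aemeasurable mU2.aemeasurable) _
    _ ≤ 2⁻¹ * ((4 * (Nsq (fun q => k' q - k q)) ^ (1/2:ℝ) * (Nsq f') ^ (1/2:ℝ))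
          + (4 * (Nsq k) ^ (1/2:ℝ) * (Nsq (fun q => f' q - f q)) ^ (1/2:ℝ))) :=
        mul_le_mul_right (add_le_add (MbigS (hk'.sub hk) hf') (MbigS hk (hf'.sub hf))) _
    _ = 2 * ((Nsq (fun q => k' q - k q)) ^ (1/2:ℝ) * (Nsq f') ^ (1/2:ℝ)
          + (Nsq k) ^ (1/2:ℝ) * (Nsq (fun q => f' q - f q)) ^ (1/2:ℝ)) := by
        rw [mul_add, mul_add, mul_assoc (4:ℝ≥0∞), mul_assoc (4:ℝ≥0∞), ← mul_assoc (2⁻¹:ℝ≥0∞),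
          ← mul_assoc (2⁻¹:ℝ≥0∞), half_four]

lemma D_d_le {k k' f f' : E3 × E3 → ℂ} (hk : Measurable k) (hk' : Measurable k')
    (hf : Measurable f) (hf' : Measurable f') :
    ∫⁻ x : E3, (‖recKer k' f' (x, x) - recKer k f (x, x)‖₊ : ℝ≥0∞) ≤
      2 * (Nsq (fun q => k' q - k q)) ^ (1/2:ℝ) * (Nsq f') ^ (1/2:ℝ)
        + 2 * (Nsq (fun q => f' q - f q)) ^ (1/2:ℝ) * (Nsq k) ^ (1/2:ℝ) := by
  have mU1 : Measurable (fun x : E3 => U (fun q => k' q - k q) f' (x, x)) :=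
    (measurable_U (hk'.sub hk) hf').comp (measurable_id.prodMk measurable_id)
  have mU2 : Measurable (fun x : E3 => U k (fun q => f' q - f q) (x, x)) :=
    (measurable_U hk (hf'.sub hf)).comp (measurable_id.prodMk measurable_id)
  calc ∫⁻ x : E3, (‖recKer k' f' (x, x) - recKer k f (x, x)‖₊ : ℝ≥0∞)
      ≤ ∫⁻ x : E3, 2⁻¹ * (U (fun q => k' q - k q) f' (x, x)
          + U k (fun q => f' q - f q) (x, x)) :=
        lintegral_mono fun x => pointwise_d hk hk' hf hf' (x, x)
    _ = 2⁻¹ * ((∫⁻ x : E3, U (fun q => k' q - k q) f' (x, x))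
          + ∫⁻ x : E3, U k (fun q => f' q - f q) (x, x)) := by
        rw [lintegral_const_mul _ (mU1.fun_add mU2), lintegral_add_left mU1]
    _ ≤ 2⁻¹ * ((4 * (Nsq (fun q => k' q - k q)) ^ (1/2:ℝ) * (Nsq f') ^ (1/2:ℝ))
          + (4 * (Nsq k) ^ (1/2:ℝ) * (Nsq (fun q => f' q - f q)) ^ (1/2:ℝ))) :=
        mul_le_mul_right (add_le_add (DbigS (hk'.sub hk) hf') (DbigS hk (hf'.sub hf))) _
    _ = 2 * (Nsq (fun q => k' q - k q)) ^ (1/2:ℝ) * (Nsq f') ^ (1/2:ℝ)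
          + 2 * (Nsq (fun q => f' q - f q)) ^ (1/2:ℝ) * (Nsq k) ^ (1/2:ℝ) := by
        have h : ∀ X Y : ℝ≥0∞, 2⁻¹ * (4 * X * Y) = 2 * X * Y := by
          intro X Y
          rw [mul_assoc 4 X Y, ← mul_assoc (2⁻¹:ℝ≥0∞) 4 (X*Y), half_four, mul_assoc]
        rw [mul_add, h, h, mul_assoc 2 ((Nsq k) ^ (1/2:ℝ)), mul_comm ((Nsq k) ^ (1/2:ℝ)),
          ← mul_assoc]


lemma fst_ae {P : E3 → Prop} (h : ∀ᵐ x ∂(volume : Measure E3), P x) :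
    ∀ᵐ p : E3 × E3 ∂(volume : Measure (E3 × E3)), P p.1 := by
  rw [MeasureTheory.Measure.volume_eq_prod E3 E3]
  exact MeasureTheory.Measure.quasiMeasurePreserving_fst.ae h

lemma snd_ae {P : E3 → Prop} (h : ∀ᵐ x ∂(volume : Measure E3), P x) :
    ∀ᵐ p : E3 × E3 ∂(volume : Measure (E3 × E3)), P p.2 := by
  rw [MeasureTheory.Measure.volume_eq_prod E3 E3]
  exact MeasureTheory.Measure.quasiMeasurePreserving_snd.ae h

lemma slice_left {g g₀ : E3 × E3 → ℂ} (h : g =ᵐ[(volume : Measure (E3 × E3))] g₀) :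
    ∀ᵐ x ∂(volume : Measure E3),
      (fun y => g (x, y)) =ᵐ[(volume : Measure E3)] (fun y => g₀ (x, y)) := by
  rw [MeasureTheory.Measure.volume_eq_prod E3 E3] at h
  exact MeasureTheory.Measure.ae_ae_of_ae_prod h

lemma swap_aeeq {g g₀ : E3 × E3 → ℂ} (h : g =ᵐ[(volume : Measure (E3 × E3))] g₀) :
    (fun q : E3 × E3 => g (q.2, q.1)) =ᵐ[(volume : Measure (E3 × E3))]
      (fun q : E3 × E3 => g₀ (q.2, q.1)) := by
  have hq : Measure.QuasiMeasurePreserving (Prod.swap : E3 × E3 → E3 × E3)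
      (volume : Measure (E3 × E3)) (volume : Measure (E3 × E3)) := by
    rw [MeasureTheory.Measure.volume_eq_prod E3 E3]
    exact MeasureTheory.Measure.measurePreserving_swap.quasiMeasurePreserving
  exact hq.ae_eq h

lemma slice_right {g g₀ : E3 × E3 → ℂ} (h : g =ᵐ[(volume : Measure (E3 × E3))] g₀) :
    ∀ᵐ z ∂(volume : Measure E3),
      (fun y => g (y, z)) =ᵐ[(volume : Measure E3)] (fun y => g₀ (y, z)) :=
  slice_left (swap_aeeq h)

lemma recKer_congr {k k₀ f f₀ : E3 × E3 → ℂ} (hk : k =ᵐ[(volume : Measure (E3 × E3))] k₀)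
    (hf : f =ᵐ[(volume : Measure (E3 × E3))] f₀) :
    recKer k f =ᵐ[(volume : Measure (E3 × E3))] recKer k₀ f₀ := by
  filter_upwards [fst_ae (slice_left hk), snd_ae (slice_right hk), fst_ae (slice_left hf),
    fst_ae (slice_right hf), snd_ae (slice_left hf), snd_ae (slice_right hf)]
    with p h1 h2 h3 h4 h5 h6
  unfold recKer
  congr 1
  apply integral_congr_ae
  filter_upwards [h1, h2, h3, h4, h5, h6] with y e1 e2 e3 e4 e5 e6
  rw [e1, e2, e3, e4, e5, e6]

lemma recKer_diag_congr {k k₀ f f₀ : E3 × E3 → ℂ} (hk : k =ᵐ[(volume : Measure (E3 × E3))] k₀)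
    (hf : f =ᵐ[(volume : Measure (E3 × E3))] f₀) :
    (fun x => recKer k f (x, x)) =ᵐ[(volume : Measure E3)] fun x => recKer k₀ f₀ (x, x) := by
  filter_upwards [slice_left hk, slice_right hk, slice_left hf, slice_right hf]
    with x h1 h2 h3 h4
  unfold recKer
  congr 1
  apply integral_congr_ae
  filter_upwards [h1, h2, h3, h4] with y e1 e2 e3 e4
  rw [e1, e2, e3, e4]

lemma measurable_recKer {k f : E3 × E3 → ℂ} (hk : Measurable k) (hf : Measurable f) :
    Measurable (recKer k f) := by
  have m1 : Measurable fun q : (E3 × E3) × E3 => (q.1.1, q.2) :=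
    (measurable_fst.fst).prodMk measurable_snd
  have m2 : Measurable fun q : (E3 × E3) × E3 => (q.1.2, q.2) :=
    (measurable_fst.snd).prodMk measurable_snd
  have m3 : Measurable fun q : (E3 × E3) × E3 => (q.2, q.1.2) :=
    measurable_snd.prodMk (measurable_fst.snd)
  have m4 : Measurable fun q : (E3 × E3) × E3 => (q.2, q.1.1) :=
    measurable_snd.prodMk (measurable_fst.fst)
  have hH : StronglyMeasurable (fun q : (E3 × E3) × E3 =>
      k (q.1.1, q.2) * (f (q.1.2, q.2) + f (q.2, q.1.2))
        + starRingEnd ℂ (k (q.2, q.1.2)) * (f (q.1.1, q.2) + f (q.2, q.1.1))) := by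
    refine Measurable.stronglyMeasurable ?_
    exact ((hk.comp m1).mul ((hf.comp m2).add (hf.comp m3))).add
      ((Complex.continuous_conj.measurable.comp (hk.comp m3)).mul
        ((hf.comp m1).add (hf.comp m4)))
  have hI : StronglyMeasurable (fun p : E3 × E3 => ∫ y : E3,
      (k (p.1, y) * (f (p.2, y) + f (y, p.2))
        + starRingEnd ℂ (k (y, p.2)) * (f (p.1, y) + f (y, p.1)))) :=
    hH.integral_prod_right'
  exact hI.measurable.const_mul _

lemma Nsq_congr {g g₀ : E3 × E3 → ℂ} (h : g =ᵐ[(volume : Measure (E3 × E3))] g₀) :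
    Nsq g = Nsq g₀ := by
  unfold Nsq
  apply lintegral_congr_ae
  filter_upwards [h] with p hp
  rw [hp]

lemma eLpNorm_two (h : E3 × E3 → ℂ) :
    eLpNorm h 2 (volume : Measure (E3 × E3)) = (Nsq h) ^ (1/2:ℝ) := by
  rw [eLpNorm_eq_lintegral_rpow_enorm_toReal two_ne_zero ENNReal.ofNat_ne_top]
  have h2 : (2:ℝ≥0∞).toReal = ((2:ℕ):ℝ) := by norm_num
  rw [h2]
  congr 1
  unfold Nsq
  apply lintegral_congr
  intro p
  rw [ENNReal.rpow_natCast]; rfl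

lemma Nsq_ne_top {h : E3 × E3 → ℂ} (hh : MemLp h 2 (volume : Measure (E3 × E3))) :
    Nsq h ≠ ⊤ := by
  intro htop
  have h2 := hh.2
  rw [eLpNorm_two, htop] at h2
  rw [ENNReal.top_rpow_of_pos (by norm_num)] at h2
  exact (lt_irrefl _) h2

lemma l2n_eq {h : E3 × E3 → ℂ} (hsm : AEStronglyMeasurable h (volume : Measure (E3 × E3))) :
    l2n h = ((Nsq h) ^ (1/2:ℝ)).toReal := by
  unfold l2n
  have hmm : AEStronglyMeasurable (fun p : E3 × E3 => ‖h p‖ ^ 2)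
      (volume : Measure (E3 × E3)) := (continuous_pow 2).comp_aestronglyMeasurable hsm.norm
  rw [integral_eq_lintegral_of_nonneg_ae
    (Filter.Eventually.of_forall fun p => pow_nonneg (norm_nonneg _) 2) hmm]
  have : ∀ p : E3 × E3, ENNReal.ofReal (‖h p‖ ^ 2) = (‖h p‖₊ : ℝ≥0∞) ^ 2 := by
    intro p
    rw [ENNReal.ofReal_pow (norm_nonneg _), ofReal_norm_eq_enorm]; rfl
  simp_rw [this]
  rw [show (∫⁻ p : E3 × E3, (‖h p‖₊ : ℝ≥0∞) ^ 2) = Nsq h from rfl]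
  rw [← ENNReal.toReal_rpow, Real.sqrt_eq_rpow]

end Stmt8Aux

open Stmt8Aux

/-- For `k, k', f, f' ∈ L²(ℝ³×ℝ³)` and `g, g'` the kernels built from `(k,f)` and `(k',f')`
by the recursion of the iterated commutators, one has `g, g' ∈ L²`, `‖g‖₂ ≤ 2‖k‖₂‖f‖₂`,
`‖g'−g‖₂ ≤ 2(‖k'−k‖₂‖f'‖₂ + ‖k‖₂‖f'−f‖₂)`, and
`∫ |g'(x,x)−g(x,x)| dx ≤ 2‖k'−k‖₂‖f'‖₂ + 2‖f'−f‖₂‖k‖₂`. -/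
theorem stmt8 (k k' f f' : E3 × E3 → ℂ)
    (hk : MemLp k 2 (volume : Measure (E3 × E3)))
    (hk' : MemLp k' 2 (volume : Measure (E3 × E3)))
    (hf : MemLp f 2 (volume : Measure (E3 × E3)))
    (hf' : MemLp f' 2 (volume : Measure (E3 × E3))) :
    MemLp (recKer k f) 2 (volume : Measure (E3 × E3)) ∧
    MemLp (recKer k' f') 2 (volume : Measure (E3 × E3)) ∧
    l2n (recKer k f) ≤ 2 * l2n k * l2n f ∧
    l2n (fun p => recKer k' f' p - recKer k f p) ≤
      2 * (l2n (fun p => k' p - k p) * l2n f' + l2n k * l2n (fun p => f' p - f p)) ∧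
    (∫ x : E3, ‖recKer k' f' (x, x) - recKer k f (x, x)‖) ≤
      2 * l2n (fun p => k' p - k p) * l2n f' + 2 * l2n (fun p => f' p - f p) * l2n k := by
  classical
  set k₀ : E3 × E3 → ℂ := hk.1.mk k with hk₀def
  set k'₀ : E3 × E3 → ℂ := hk'.1.mk k' with hk'₀def
  set f₀ : E3 × E3 → ℂ := hf.1.mk f with hf₀def
  set f'₀ : E3 × E3 → ℂ := hf'.1.mk f' with hf'₀def
  have hk₀m : Measurable k₀ := hk.1.stronglyMeasurable_mk.measurable
  have hk'₀m : Measurable k'₀ := hk'.1.stronglyMeasurable_mk.measurable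
  have hf₀m : Measurable f₀ := hf.1.stronglyMeasurable_mk.measurable
  have hf'₀m : Measurable f'₀ := hf'.1.stronglyMeasurable_mk.measurable
  have hke : k =ᵐ[(volume : Measure (E3 × E3))] k₀ := hk.1.ae_eq_mk
  have hk'e : k' =ᵐ[(volume : Measure (E3 × E3))] k'₀ := hk'.1.ae_eq_mk
  have hfe : f =ᵐ[(volume : Measure (E3 × E3))] f₀ := hf.1.ae_eq_mk
  have hf'e : f' =ᵐ[(volume : Measure (E3 × E3))] f'₀ := hf'.1.ae_eq_mk
  have hg : recKer k f =ᵐ[(volume : Measure (E3 × E3))] recKer k₀ f₀ := recKer_congr hke hfe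
  have hg' : recKer k' f' =ᵐ[(volume : Measure (E3 × E3))] recKer k'₀ f'₀ :=
    recKer_congr hk'e hf'e
  have eNk : Nsq k = Nsq k₀ := Nsq_congr hke
  have eNk' : Nsq k' = Nsq k'₀ := Nsq_congr hk'e
  have eNf : Nsq f = Nsq f₀ := Nsq_congr hfe
  have eNf' : Nsq f' = Nsq f'₀ := Nsq_congr hf'e
  have eNdk : Nsq (fun q => k' q - k q) = Nsq (fun q => k'₀ q - k₀ q) :=
    Nsq_congr (hk'e.sub hke)
  have eNdf : Nsq (fun q => f' q - f q) = Nsq (fun q => f'₀ q - f₀ q) :=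
    Nsq_congr (hf'e.sub hfe)
  have finNk : Nsq k₀ ≠ ⊤ := eNk ▸ Nsq_ne_top hk
  have finNf : Nsq f₀ ≠ ⊤ := eNf ▸ Nsq_ne_top hf
  have finNf' : Nsq f'₀ ≠ ⊤ := eNf' ▸ Nsq_ne_top hf'
  have memdk : MemLp (fun q => k' q - k q) 2 (volume : Measure (E3 × E3)) := hk'.sub hk
  have memdf : MemLp (fun q => f' q - f q) 2 (volume : Measure (E3 × E3)) := hf'.sub hf
  have finNdk : Nsq (fun q => k'₀ q - k₀ q) ≠ ⊤ := eNdk ▸ Nsq_ne_top memdk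
  have finNdf : Nsq (fun q => f'₀ q - f₀ q) ≠ ⊤ := eNdf ▸ Nsq_ne_top memdf
  have rk : (Nsq k₀) ^ (1/2:ℝ) ≠ ⊤ :=
    (ENNReal.rpow_lt_top_of_nonneg (by norm_num) finNk).ne
  have rf : (Nsq f₀) ^ (1/2:ℝ) ≠ ⊤ :=
    (ENNReal.rpow_lt_top_of_nonneg (by norm_num) finNf).ne
  have rf' : (Nsq f'₀) ^ (1/2:ℝ) ≠ ⊤ :=
    (ENNReal.rpow_lt_top_of_nonneg (by norm_num) finNf').ne
  have rdk : (Nsq (fun q => k'₀ q - k₀ q)) ^ (1/2:ℝ) ≠ ⊤ :=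
    (ENNReal.rpow_lt_top_of_nonneg (by norm_num) finNdk).ne
  have rdf : (Nsq (fun q => f'₀ q - f₀ q)) ^ (1/2:ℝ) ≠ ⊤ :=
    (ENNReal.rpow_lt_top_of_nonneg (by norm_num) finNdf).ne
  have lk : l2n k = ((Nsq k₀) ^ (1/2:ℝ)).toReal := by rw [l2n_eq hk.1, eNk]
  have lf : l2n f = ((Nsq f₀) ^ (1/2:ℝ)).toReal := by rw [l2n_eq hf.1, eNf]
  have lf' : l2n f' = ((Nsq f'₀) ^ (1/2:ℝ)).toReal := by rw [l2n_eq hf'.1, eNf']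
  have hsubk : AEStronglyMeasurable (fun p : E3 × E3 => k' p - k p)
      (volume : Measure (E3 × E3)) := hk'.1.sub hk.1
  have hsubf : AEStronglyMeasurable (fun p : E3 × E3 => f' p - f p)
      (volume : Measure (E3 × E3)) := hf'.1.sub hf.1
  have ldk : l2n (fun p => k' p - k p)
      = ((Nsq (fun q => k'₀ q - k₀ q)) ^ (1/2:ℝ)).toReal := by
    rw [l2n_eq hsubk, eNdk]
  have ldf : l2n (fun p => f' p - f p)
      = ((Nsq (fun q => f'₀ q - f₀ q)) ^ (1/2:ℝ)).toReal := by
    rw [l2n_eq hsubf, eNdf]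
  have mem1 : MemLp (recKer k f) 2 (volume : Measure (E3 × E3)) := by
    constructor
    · exact (measurable_recKer hk₀m hf₀m).aestronglyMeasurable.congr hg.symm
    · rw [eLpNorm_congr_ae hg, eLpNorm_two]
      refine lt_of_le_of_lt (M_g_le hk₀m hf₀m) ?_
      exact ENNReal.mul_lt_top
        (ENNReal.mul_lt_top (by norm_num) rk.lt_top) rf.lt_top
  have mem2 : MemLp (recKer k' f') 2 (volume : Measure (E3 × E3)) := by
    constructor
    · exact (measurable_recKer hk'₀m hf'₀m).aestronglyMeasurable.congr hg'.symm
    · rw [eLpNorm_congr_ae hg', eLpNorm_two]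
      refine lt_of_le_of_lt (M_g_le hk'₀m hf'₀m) ?_
      refine ENNReal.mul_lt_top (ENNReal.mul_lt_top (by norm_num) ?_) rf'.lt_top
      exact ((ENNReal.rpow_lt_top_of_nonneg (by norm_num)
        (eNk' ▸ Nsq_ne_top hk' : Nsq k'₀ ≠ ⊤)))
  refine ⟨mem1, mem2, ?_, ?_, ?_⟩
  · -- l2n bound for g
    have hle := M_g_le hk₀m hf₀m
    have hfin : (2:ℝ≥0∞) * (Nsq k₀) ^ (1/2:ℝ) * (Nsq f₀) ^ (1/2:ℝ) ≠ ⊤ :=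
      (ENNReal.mul_lt_top (ENNReal.mul_lt_top (by norm_num) rk.lt_top) rf.lt_top).ne
    have hmono := ENNReal.toReal_mono hfin hle
    rw [l2n_eq mem1.1, Nsq_congr hg, lk, lf]
    refine le_trans hmono (le_of_eq ?_)
    rw [ENNReal.toReal_mul, ENNReal.toReal_mul, ENNReal.toReal_ofNat]
  · -- l2n bound for difference
    have hle := M_d_le hk₀m hk'₀m hf₀m hf'₀m
    have hfin : (2:ℝ≥0∞) * ((Nsq (fun q => k'₀ q - k₀ q)) ^ (1/2:ℝ) * (Nsq f'₀) ^ (1/2:ℝ)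
        + (Nsq k₀) ^ (1/2:ℝ) * (Nsq (fun q => f'₀ q - f₀ q)) ^ (1/2:ℝ)) ≠ ⊤ := by
      refine (ENNReal.mul_lt_top (by norm_num) ?_).ne
      exact ENNReal.add_lt_top.2 ⟨ENNReal.mul_lt_top rdk.lt_top rf'.lt_top,
        ENNReal.mul_lt_top rk.lt_top rdf.lt_top⟩
    have hmono := ENNReal.toReal_mono hfin hle
    have hdiffae : (fun p => recKer k' f' p - recKer k f p)
        =ᵐ[(volume : Measure (E3 × E3))] (fun p => recKer k'₀ f'₀ p - recKer k₀ f₀ p) :=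
      hg'.sub hg
    have hsubg : AEStronglyMeasurable (fun p : E3 × E3 => recKer k' f' p - recKer k f p)
        (volume : Measure (E3 × E3)) := mem2.1.sub mem1.1
    rw [l2n_eq hsubg, Nsq_congr hdiffae, ldk, lf', lk, ldf]
    refine le_trans hmono (le_of_eq ?_)
    rw [ENNReal.toReal_mul, ENNReal.toReal_ofNat, ENNReal.toReal_add
      (ENNReal.mul_lt_top rdk.lt_top rf'.lt_top).ne (ENNReal.mul_lt_top rk.lt_top rdf.lt_top).ne,
      ENNReal.toReal_mul, ENNReal.toReal_mul]
  · -- diagonal bound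
    have hdd : (fun x : E3 => ‖recKer k' f' (x, x) - recKer k f (x, x)‖)
        =ᵐ[(volume : Measure E3)]
        (fun x : E3 => ‖recKer k'₀ f'₀ (x, x) - recKer k₀ f₀ (x, x)‖) := by
      filter_upwards [recKer_diag_congr hk'e hf'e, recKer_diag_congr hke hfe] with x e1 e2
      rw [e1, e2]
    rw [integral_congr_ae hdd]
    have hΔm : Measurable (fun x : E3 => recKer k'₀ f'₀ (x, x) - recKer k₀ f₀ (x, x)) := by
      have r1 : (fun x : E3 => recKer k'₀ f'₀ (x, x))
          = (recKer k'₀ f'₀) ∘ (fun x : E3 => (x, x)) := rfl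
      have r2 : (fun x : E3 => recKer k₀ f₀ (x, x))
          = (recKer k₀ f₀) ∘ (fun x : E3 => (x, x)) := rfl
      have m1 : Measurable (fun x : E3 => recKer k'₀ f'₀ (x, x)) := by
        rw [r1]; exact (measurable_recKer hk'₀m hf'₀m).comp
          (measurable_id.prodMk measurable_id)
      have m2 : Measurable (fun x : E3 => recKer k₀ f₀ (x, x)) := by
        rw [r2]; exact (measurable_recKer hk₀m hf₀m).comp
          (measurable_id.prodMk measurable_id)
      exact m1.sub m2
    rw [integral_eq_lintegral_of_nonneg_ae
      (Filter.Eventually.of_forall fun x => norm_nonneg _) hΔm.norm.aestronglyMeasurable]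
    simp_rw [ofReal_norm_eq_enorm]
    have hle := D_d_le hk₀m hk'₀m hf₀m hf'₀m
    have hfin : (2:ℝ≥0∞) * (Nsq (fun q => k'₀ q - k₀ q)) ^ (1/2:ℝ) * (Nsq f'₀) ^ (1/2:ℝ)
        + 2 * (Nsq (fun q => f'₀ q - f₀ q)) ^ (1/2:ℝ) * (Nsq k₀) ^ (1/2:ℝ) ≠ ⊤ := by
      refine (ENNReal.add_lt_top.2 ⟨?_, ?_⟩).ne
      · exact ENNReal.mul_lt_top (ENNReal.mul_lt_top (by norm_num) rdk.lt_top) rf'.lt_top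
      · exact ENNReal.mul_lt_top (ENNReal.mul_lt_top (by norm_num) rdf.lt_top) rk.lt_top
    have hmono := ENNReal.toReal_mono hfin hle
    rw [ldk, lf', ldf, lk]
    refine le_trans hmono (le_of_eq ?_)
    rw [ENNReal.toReal_add
      (ENNReal.mul_lt_top (ENNReal.mul_lt_top (by norm_num) rdk.lt_top) rf'.lt_top).ne
      (ENNReal.mul_lt_top (ENNReal.mul_lt_top (by norm_num) rdf.lt_top) rk.lt_top).ne,
      ENNReal.toReal_mul, ENNReal.toReal_mul, ENNReal.toReal_mul, ENNReal.toReal_mul,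
      ENNReal.toReal_ofNat]
end
end

section
/- Let 0 < β < 1, ℓ > 0, R > 0, C₁, C₂, M > 0, and let N ≥ 1 satisfy R N^{−β} ≤ ℓ. Let ω_N, ω : ℝ³ → ℝ be measurable with 0 ≤ N ω_N(x) ≤ C₂/|x| and 0 ≤ ω(x) ≤ C₂/|x| for all x ≠ 0, ω_N(x) = ω(x) = 0 for |x| > ℓ, and |N ω_N(x) − ω(x)| ≤ C₁ N^{−(1−β)}/|x| for all x with |x| ≥ R N^{−β}. Let φ_N, φ ∈ L⁴(ℝ³; ℂ) ∩ L^∞(ℝ³; ℂ) with ‖φ_N‖_∞ ≤ M, ‖φ‖_∞ ≤ M and φ_N − φ ∈ L²(ℝ³). Define k_N(x,y) := N ω_N(x−y) φ_N((x+y)/2)² and k(x,y) := ω(x−y) φ((x+y)/2)². Then ‖k_N − k‖_{L²(ℝ³×ℝ³)}² ≤ 8πℓ C₁² N^{−2(1−β)} ‖φ_N‖₄⁴ + 32πR C₂² N^{−β} ‖φ_N‖₄⁴ + 32πℓ C₂² M² ‖φ_N − φ‖₂². -/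
open MeasureTheory Real
open scoped ENNReal

noncomputable section

open Metric Set in
lemma lintegral_comp_norm_E3 (F : ℝ → ℝ≥0∞) (hF : Measurable F) :
    ∫⁻ x : E3, F ‖x‖
      = ((3 : ℕ) : ℝ≥0∞) * volume (ball (0 : E3) 1)
          * ∫⁻ y in Ioi (0 : ℝ), ENNReal.ofReal (y ^ 2) * F y := by
  have hdim : Module.finrank ℝ E3 = 3 := finrank_euclideanSpace_fin
  have hdim' : Module.finrank ℝ E3 - 1 = 2 := by rw [hdim]
  have hvio : ∫⁻ y : Ioi (0:ℝ), F ↑y ∂(Measure.volumeIoiPow 2)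
      = ∫⁻ y in Ioi (0:ℝ), ENNReal.ofReal (y ^ 2) * F y := by
    rw [Measure.volumeIoiPow, lintegral_withDensity_eq_lintegral_mul
        (f := fun r : Ioi (0:ℝ) => ENNReal.ofReal (r.1 ^ 2))
        (g := fun y : Ioi (0:ℝ) => F ↑y) _
        ((measurable_subtype_coe.pow_const 2).ennreal_ofReal)
        (hF.comp measurable_subtype_coe)]
    simp only [Pi.mul_apply, Function.comp_apply]
    exact lintegral_subtype_comap measurableSet_Ioi
      (fun y => ENNReal.ofReal (y ^ 2) * F y)
  calc ∫⁻ x : E3, F ‖x‖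
      = ∫⁻ x in ({0}ᶜ : Set E3), F ‖x‖ := by
        rw [restrict_compl_singleton]
    _ = ∫⁻ x : (({0}ᶜ : Set E3)), F ‖x.1‖ ∂((volume : Measure E3).comap (↑)) :=
        (lintegral_subtype_comap (measurableSet_singleton _).compl _).symm
    _ = ∫⁻ p : sphere (0:E3) 1 × Ioi (0:ℝ), F p.2
          ∂((volume : Measure E3).toSphere.prod
              (Measure.volumeIoiPow (Module.finrank ℝ E3 - 1))) := by
        rw [← (Measure.measurePreserving_homeomorphUnitSphereProd
            (volume : Measure E3)).lintegral_comp_emb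
            (Homeomorph.measurableEmbedding _) (fun p => F p.2)]
        simp
    _ = ((3 : ℕ) : ℝ≥0∞) * volume (ball (0 : E3) 1)
          * ∫⁻ y in Ioi (0 : ℝ), ENNReal.ofReal (y ^ 2) * F y := by
        rw [lintegral_prod (fun p : ↑(sphere (0:E3) 1) × ↑(Ioi (0:ℝ)) => F ↑p.2)
          ((hF.comp measurable_subtype_coe).comp measurable_snd).aemeasurable]
        simp only [lintegral_const]
        rw [hdim', hvio, Measure.toSphere_apply_univ, hdim]
        ring

open Metric Set in
lemma lintegral_indicator_inv_sq (r : ℝ) (hr : 0 ≤ r) :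
    ∫⁻ u : E3, (closedBall (0:E3) r).indicator
        (fun u => (ENNReal.ofReal (‖u‖ ^ 2))⁻¹) u
      = ENNReal.ofReal (4 * π * r) := by
  have hπ : (0:ℝ) < √π := Real.sqrt_pos.2 pi_pos
  have hΓ : Real.Gamma ((3:ℝ)/2 + 1) = 3/4 * √π := by
    rw [Real.Gamma_add_one (by norm_num)]
    rw [show (3:ℝ)/2 = 1/2 + 1 by norm_num, Real.Gamma_add_one (by norm_num),
      Real.Gamma_one_half_eq]
    ring
  have hball : volume (ball (0:E3) 1) = ENNReal.ofReal (4/3 * π) := by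
    rw [EuclideanSpace.volume_ball]
    simp only [Fintype.card_fin]
    rw [show ((3:ℕ):ℝ)/2 + 1 = (3:ℝ)/2 + 1 by norm_num, hΓ]
    have h3 : √π ^ 3 = π * √π := by
      rw [pow_succ, sq_sqrt pi_pos.le]
    rw [h3, show π * √π / (3/4 * √π) = 4/3 * π by field_simp]
    simp
  set F : ℝ → ℝ≥0∞ := (Iic r).indicator (fun s => (ENNReal.ofReal (s ^ 2))⁻¹) with hFdef
  have hFm : Measurable F :=
    Measurable.indicator ((measurable_id.pow_const 2).ennreal_ofReal.inv) measurableSet_Iic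
  have hrepr : ∀ u : E3, (closedBall (0:E3) r).indicator
      (fun u => (ENNReal.ofReal (‖u‖ ^ 2))⁻¹) u = F ‖u‖ := by
    intro u
    classical
    rw [hFdef, Set.indicator_apply, Set.indicator_apply]
    simp only [mem_closedBall_zero_iff, mem_Iic]
  simp_rw [hrepr]
  rw [lintegral_comp_norm_E3 F hFm]
  have hinner : ∫⁻ y in Ioi (0:ℝ), ENNReal.ofReal (y ^ 2) * F y
      = ENNReal.ofReal r := by
    have heq : ∀ y ∈ Ioi (0:ℝ), ENNReal.ofReal (y ^ 2) * F y
        = (Iic r).indicator (fun _ => (1:ℝ≥0∞)) y := by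
      intro y hy
      have hy' : (0:ℝ) < y := hy
      classical
      rw [hFdef, Set.indicator_apply, Set.indicator_apply]
      split_ifs with h
      · exact ENNReal.mul_inv_cancel (ne_of_gt (ENNReal.ofReal_pos.2 (pow_pos hy' 2)))
          ENNReal.ofReal_ne_top
      · simp
    rw [setLIntegral_congr_fun measurableSet_Ioi heq,
      lintegral_indicator measurableSet_Iic, Measure.restrict_restrict measurableSet_Iic,
      setLIntegral_one, Set.inter_comm, Set.Ioi_inter_Iic, Real.volume_Ioc]
    norm_num
  rw [hinner, hball, ← ENNReal.ofReal_natCast 3, ← ENNReal.ofReal_mul (by positivity),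
    ← ENNReal.ofReal_mul (by positivity)]
  congr 1
  push_cast
  ring


def T3 : (E3 × E3) ≃ᵐ (E3 × E3) :=
{ toFun := fun p => (p.1 - p.2, (2:ℝ)⁻¹ • (p.1 + p.2)),
  invFun := fun q => (q.2 + (2:ℝ)⁻¹ • q.1, q.2 - (2:ℝ)⁻¹ • q.1),
  left_inv := fun p => by
    refine Prod.ext ?_ ?_
    · show (2:ℝ)⁻¹ • (p.1 + p.2) + (2:ℝ)⁻¹ • (p.1 - p.2) = p.1
      module
    · show (2:ℝ)⁻¹ • (p.1 + p.2) - (2:ℝ)⁻¹ • (p.1 - p.2) = p.2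
      module,
  right_inv := fun q => by
    refine Prod.ext ?_ ?_
    · show (q.2 + (2:ℝ)⁻¹ • q.1) - (q.2 - (2:ℝ)⁻¹ • q.1) = q.1
      module
    · show (2:ℝ)⁻¹ • ((q.2 + (2:ℝ)⁻¹ • q.1) + (q.2 - (2:ℝ)⁻¹ • q.1)) = q.2
      module,
  measurable_toFun := ((measurable_fst.sub measurable_snd).prodMk
    ((measurable_fst.add measurable_snd).const_smul ((2:ℝ)⁻¹))),
  measurable_invFun := ((measurable_snd.add (measurable_fst.const_smul ((2:ℝ)⁻¹))).prodMk
    (measurable_snd.sub (measurable_fst.const_smul ((2:ℝ)⁻¹)))) }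

lemma T3_mp : MeasurePreserving (⇑T3) (volume : Measure (E3 × E3)) volume := by
  have h1 : MeasurePreserving (fun p : E3 × E3 => (p.1 - p.2, p.2))
      ((volume : Measure E3).prod volume) ((volume : Measure E3).prod volume) :=
    measurePreserving_sub_prod volume volume
  have h2 : MeasurePreserving (fun q : E3 × E3 => (q.1, q.2 + (2:ℝ)⁻¹ • q.1))
      ((volume : Measure E3).prod volume) ((volume : Measure E3).prod volume) :=
    (MeasurePreserving.id volume).skew_product
      (g := fun a c => c + (2:ℝ)⁻¹ • a)
      (by fun_prop)
      (Filter.Eventually.of_forall fun a => (measurePreserving_add_right volume ((2:ℝ)⁻¹ • a)).map_eq)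
  have h3 := h2.comp h1
  have hfun : ((fun q : E3 × E3 => (q.1, q.2 + (2:ℝ)⁻¹ • q.1)) ∘
      (fun p : E3 × E3 => (p.1 - p.2, p.2))) = ⇑T3 := by
    funext p
    refine Prod.ext rfl ?_
    show p.2 + (2:ℝ)⁻¹ • (p.1 - p.2) = (2:ℝ)⁻¹ • (p.1 + p.2)
    module
  rw [hfun] at h3
  exact h3

open Metric Set

set_option maxHeartbeats 1000000

/-- Quantitative `L²` comparison of the correlation kernel
`k_N(x,y) = N ω_N(x−y) φ_N((x+y)/2)²` with its limit `k(x,y) = ω(x−y) φ((x+y)/2)²`. -/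
theorem stmt10 (β ℓ R C₁ C₂ M N : ℝ)
    (hβ0 : 0 < β) (hβ1 : β < 1) (hℓ : 0 < ℓ) (hR : 0 < R)
    (hC₁ : 0 < C₁) (hC₂ : 0 < C₂) (hM : 0 < M) (hN : 1 ≤ N)
    (hRN : R * N ^ (-β) ≤ ℓ)
    (ωN ω : E3 → ℝ) (hωNm : Measurable ωN) (hωm : Measurable ω)
    (hωN0 : ∀ x, 0 ≤ N * ωN x) (hω0 : ∀ x, 0 ≤ ω x)
    (hωNb : ∀ x : E3, x ≠ 0 → N * ωN x ≤ C₂ / ‖x‖)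
    (hωb : ∀ x : E3, x ≠ 0 → ω x ≤ C₂ / ‖x‖)
    (hωNs : ∀ x : E3, ℓ < ‖x‖ → ωN x = 0) (hωs : ∀ x : E3, ℓ < ‖x‖ → ω x = 0)
    (hdiff : ∀ x : E3, R * N ^ (-β) ≤ ‖x‖ → |N * ωN x - ω x| ≤ C₁ * N ^ (-(1 - β)) / ‖x‖)
    (φN φ : E3 → ℂ)
    (hφN4 : MemLp φN 4 (volume : Measure E3)) (hφ4 : MemLp φ 4 (volume : Measure E3))
    (hφNbdd : ∀ᵐ x : E3, ‖φN x‖ ≤ M) (hφbdd : ∀ᵐ x : E3, ‖φ x‖ ≤ M)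
    (hφd : MemLp (fun x : E3 => φN x - φ x) 2 (volume : Measure E3)) :
    (∫⁻ p : E3 × E3, ENNReal.ofReal
        (‖((N * ωN (p.1 - p.2) : ℝ) : ℂ) * φN ((2 : ℝ)⁻¹ • (p.1 + p.2)) ^ 2
          - ((ω (p.1 - p.2) : ℝ) : ℂ) * φ ((2 : ℝ)⁻¹ • (p.1 + p.2)) ^ 2‖ ^ 2))
      ≤ ENNReal.ofReal
        (8 * π * ℓ * C₁ ^ 2 * N ^ (-(2 * (1 - β))) * (∫ z : E3, ‖φN z‖ ^ 4)
          + 32 * π * R * C₂ ^ 2 * N ^ (-β) * (∫ z : E3, ‖φN z‖ ^ 4)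
          + 32 * π * ℓ * C₂ ^ 2 * M ^ 2 * (∫ z : E3, ‖φN z - φ z‖ ^ 2)) := by
  have hN0 : (0:ℝ) < N := lt_of_lt_of_le one_pos hN
  have hρ0 : 0 < R * N ^ (-β) := mul_pos hR (Real.rpow_pos_of_pos hN0 _)
  have hc₁0 : 0 < C₁ ^ 2 * N ^ (-(2 * (1 - β))) :=
    mul_pos (pow_pos hC₁ 2) (Real.rpow_pos_of_pos hN0 _)
  set ρ : ℝ := R * N ^ (-β) with hρdef
  set c₁ : ℝ := C₁ ^ 2 * N ^ (-(2 * (1 - β))) with hc₁def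
  set D : E3 → ℝ≥0∞ := fun u => ENNReal.ofReal ((N * ωN u - ω u) ^ 2) with hDdef
  set W : E3 → ℝ≥0∞ := fun u => ENNReal.ofReal ((ω u) ^ 2) with hWdef
  set G : E3 → ℝ≥0∞ := fun z => ENNReal.ofReal (‖φN z‖ ^ 4) with hGdef
  set H : E3 → ℝ≥0∞ :=
    fun z => ENNReal.ofReal (‖φN z + φ z‖ ^ 2 * ‖φN z - φ z‖ ^ 2) with hHdef
  have hDm : Measurable D :=
    (((measurable_const.mul hωNm).sub hωm).pow_const 2).ennreal_ofReal
  have hWm : Measurable W := (hωm.pow_const 2).ennreal_ofReal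
  have hGm : AEMeasurable G (volume : Measure E3) :=
    ((hφN4.1.norm.aemeasurable.pow_const 4).ennreal_ofReal)
  have hHm : AEMeasurable H (volume : Measure E3) :=
    (((hφN4.1.add hφ4.1).norm.aemeasurable.pow_const 2).mul
      ((hφN4.1.sub hφ4.1).norm.aemeasurable.pow_const 2)).ennreal_ofReal
  set Fq : E3 × E3 → ℝ≥0∞ := fun q =>
    ENNReal.ofReal (‖((N * ωN q.1 : ℝ) : ℂ) * φN q.2 ^ 2
      - ((ω q.1 : ℝ) : ℂ) * φ q.2 ^ 2‖ ^ 2) with hFqdef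
  -- Step 1: change of variables
  have hchange : (∫⁻ p : E3 × E3, ENNReal.ofReal
        (‖((N * ωN (p.1 - p.2) : ℝ) : ℂ) * φN ((2 : ℝ)⁻¹ • (p.1 + p.2)) ^ 2
          - ((ω (p.1 - p.2) : ℝ) : ℂ) * φ ((2 : ℝ)⁻¹ • (p.1 + p.2)) ^ 2‖ ^ 2))
      = ∫⁻ q : E3 × E3, Fq q := by
    rw [← T3_mp.lintegral_comp_emb T3.measurableEmbedding Fq]
    rfl
  -- Step 2: pointwise bound
  have hpt : ∀ q : E3 × E3, Fq q ≤ 2 * (D q.1 * G q.2) + 2 * (W q.1 * H q.2) := by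
    intro q
    set a : ℝ := N * ωN q.1 - ω q.1 with hadef
    set b : ℝ := ω q.1 with hbdef
    set w : ℂ := φN q.2 with hwdef
    set v : ℂ := φ q.2 with hvdef
    set x : ℝ := |a| * ‖w‖ ^ 2 with hxdef
    set y : ℝ := |b| * (‖w + v‖ * ‖w - v‖) with hydef
    have hsplit : ((N * ωN q.1 : ℝ) : ℂ) * w ^ 2 - ((b : ℝ) : ℂ) * v ^ 2
        = ((a : ℝ) : ℂ) * w ^ 2 + ((b : ℝ) : ℂ) * ((w + v) * (w - v)) := by
      rw [hadef, hbdef]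
      push_cast
      ring
    have hnorm : ‖((N * ωN q.1 : ℝ) : ℂ) * w ^ 2 - ((b : ℝ) : ℂ) * v ^ 2‖ ≤ x + y := by
      rw [hsplit, hxdef, hydef]
      refine (norm_add_le _ _).trans (le_of_eq ?_)
      rw [norm_mul, norm_mul, norm_mul, norm_pow, Complex.norm_real, Complex.norm_real,
        Real.norm_eq_abs, Real.norm_eq_abs]
    have hx2 : x ^ 2 = a ^ 2 * ‖w‖ ^ 4 := by
      rw [hxdef, mul_pow, sq_abs]
      ring
    have hy2 : y ^ 2 = b ^ 2 * (‖w + v‖ ^ 2 * ‖w - v‖ ^ 2) := by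
      rw [hydef, mul_pow, sq_abs]
      ring
    have hxy0 : 0 ≤ x := mul_nonneg (abs_nonneg _) (by positivity)
    have hyy0 : 0 ≤ y := mul_nonneg (abs_nonneg _) (by positivity)
    have hsq : ‖((N * ωN q.1 : ℝ) : ℂ) * w ^ 2 - ((b : ℝ) : ℂ) * v ^ 2‖ ^ 2
        ≤ 2 * (a ^ 2 * ‖w‖ ^ 4) + 2 * (b ^ 2 * (‖w + v‖ ^ 2 * ‖w - v‖ ^ 2)) := by
      rw [← hx2, ← hy2]
      calc ‖((N * ωN q.1 : ℝ) : ℂ) * w ^ 2 - ((b : ℝ) : ℂ) * v ^ 2‖ ^ 2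
          ≤ (x + y) ^ 2 := pow_le_pow_left₀ (norm_nonneg _) hnorm 2
        _ ≤ 2 * x ^ 2 + 2 * y ^ 2 := by nlinarith [sq_nonneg (x - y)]
    refine le_trans (ENNReal.ofReal_le_ofReal hsq) ?_
    rw [ENNReal.ofReal_add (by positivity) (by positivity),
      ENNReal.ofReal_mul (by norm_num : (0:ℝ) ≤ 2),
      ENNReal.ofReal_mul (by norm_num : (0:ℝ) ≤ 2),
      ENNReal.ofReal_mul (sq_nonneg _), ENNReal.ofReal_mul (sq_nonneg _),
      ENNReal.ofReal_ofNat]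
  -- Step 3: product factorization
  have hprod : ∫⁻ q : E3 × E3, (2 * (D q.1 * G q.2) + 2 * (W q.1 * H q.2))
      = 2 * ((∫⁻ u, D u) * (∫⁻ z, G z)) + 2 * ((∫⁻ u, W u) * (∫⁻ z, H z)) := by
    rw [MeasureTheory.Measure.volume_eq_prod]
    have hfm : AEMeasurable (fun q : E3 × E3 => 2 * (D q.1 * G q.2))
        ((volume : Measure E3).prod volume) :=
      ((hDm.comp measurable_fst).aemeasurable.mul hGm.comp_snd).const_mul 2
    rw [lintegral_add_left' hfm _,
      lintegral_const_mul' 2 _ (by simp), lintegral_const_mul' 2 _ (by simp),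
      lintegral_prod_mul hDm.aemeasurable hGm, lintegral_prod_mul hWm.aemeasurable hHm]
  set Jl : E3 → ℝ≥0∞ := fun u =>
    (closedBall (0:E3) ℓ).indicator (fun u => (ENNReal.ofReal (‖u‖ ^ 2))⁻¹) u with hJldef
  set Jr : E3 → ℝ≥0∞ := fun u =>
    (closedBall (0:E3) ρ).indicator (fun u => (ENNReal.ofReal (‖u‖ ^ 2))⁻¹) u with hJrdef
  have hJlm : Measurable Jl :=
    Measurable.indicator ((measurable_norm.pow_const 2).ennreal_ofReal.inv)
      measurableSet_closedBall
  have hmemtop : ∀ (r c : ℝ), 0 < r → 0 < c →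
      ENNReal.ofReal c * ((closedBall (0:E3) r).indicator
        (fun u => (ENNReal.ofReal (‖u‖ ^ 2))⁻¹) (0:E3)) = ⊤ := by
    intro r c hr hc
    rw [Set.indicator_of_mem (mem_closedBall_self hr.le)]
    simp [ENNReal.mul_top, (ENNReal.ofReal_pos.2 hc).ne']
  -- Step 4: bound on ∫ D
  have hDle : ∀ u : E3, D u ≤ ENNReal.ofReal c₁ * Jl u + ENNReal.ofReal (4 * C₂ ^ 2) * Jr u := by
    intro u
    by_cases hu : u = 0
    · subst hu
      rw [hJldef, hmemtop ℓ c₁ hℓ hc₁0, top_add]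
      exact le_top
    · have hu0 : 0 < ‖u‖ := norm_pos_iff.2 hu
      by_cases hur : ‖u‖ ≤ ℓ
      · have hJl : Jl u = ENNReal.ofReal ((‖u‖ ^ 2)⁻¹) := by
          rw [hJldef]
          simp only [Set.indicator_of_mem (mem_closedBall_zero_iff.2 hur)]
          rw [ENNReal.ofReal_inv_of_pos (by positivity)]
        by_cases hu2 : ρ ≤ ‖u‖
        · refine le_trans ?_ le_self_add
          rw [hJl, ← ENNReal.ofReal_mul hc₁0.le]
          apply ENNReal.ofReal_le_ofReal
          have hd := hdiff u hu2
          have hrpow : (N ^ (-(1 - β)) : ℝ) ^ 2 = N ^ (-(2 * (1 - β))) := by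
            rw [sq, ← Real.rpow_add hN0]
            congr 1
            ring
          have h1 : (N * ωN u - ω u) ^ 2 ≤ (C₁ * N ^ (-(1 - β)) / ‖u‖) ^ 2 := by
            rw [← sq_abs]
            exact pow_le_pow_left₀ (abs_nonneg _) hd 2
          refine h1.trans (le_of_eq ?_)
          rw [div_pow, mul_pow, hrpow, hc₁def]
          ring
        · refine le_trans ?_ le_add_self
          have hJr : Jr u = ENNReal.ofReal ((‖u‖ ^ 2)⁻¹) := by
            rw [hJrdef]
            simp only [Set.indicator_of_mem
              (mem_closedBall_zero_iff.2 (le_of_lt (lt_of_not_ge hu2)))]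
            rw [ENNReal.ofReal_inv_of_pos (by positivity)]
          rw [hJr, ← ENNReal.ofReal_mul (by positivity)]
          apply ENNReal.ofReal_le_ofReal
          have hb1 := hωNb u hu
          have hb2 := hωb u hu
          have ha1 := hωN0 u
          have ha2 := hω0 u
          have h1 : (N * ωN u - ω u) ^ 2 ≤ (2 * C₂ / ‖u‖) ^ 2 := by
            have hsum : N * ωN u + ω u ≤ 2 * C₂ / ‖u‖ := by
              rw [show (2:ℝ) * C₂ / ‖u‖ = C₂ / ‖u‖ + C₂ / ‖u‖ by ring]
              exact add_le_add hb1 hb2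
            nlinarith [mul_nonneg ha1 ha2]
          refine h1.trans (le_of_eq ?_)
          rw [div_pow]
          ring
      · have h1 : ωN u = 0 := hωNs u (lt_of_not_ge hur)
        have h2 : ω u = 0 := hωs u (lt_of_not_ge hur)
        rw [hDdef]
        simp [h1, h2]
  have hDint : ∫⁻ u, D u ≤ ENNReal.ofReal (c₁ * (4 * π * ℓ) + 4 * C₂ ^ 2 * (4 * π * ρ)) := by
    refine le_trans (lintegral_mono hDle) (le_of_eq ?_)
    rw [lintegral_add_left (hJlm.const_mul _) _,
      lintegral_const_mul' _ _ ENNReal.ofReal_ne_top,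
      lintegral_const_mul' _ _ ENNReal.ofReal_ne_top,
      hJldef, hJrdef,
      lintegral_indicator_inv_sq ℓ hℓ.le, lintegral_indicator_inv_sq ρ hρ0.le,
      ← ENNReal.ofReal_mul hc₁0.le, ← ENNReal.ofReal_mul (by positivity),
      ← ENNReal.ofReal_add (by positivity) (by positivity)]
  -- Step 5: bound on ∫ W
  have hWle : ∀ u : E3, W u ≤ ENNReal.ofReal (C₂ ^ 2) * Jl u := by
    intro u
    by_cases hu : u = 0
    · subst hu
      rw [hJldef, hmemtop ℓ (C₂ ^ 2) hℓ (pow_pos hC₂ 2)]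
      exact le_top
    · have hu0 : 0 < ‖u‖ := norm_pos_iff.2 hu
      by_cases hur : ‖u‖ ≤ ℓ
      · have hJl : Jl u = ENNReal.ofReal ((‖u‖ ^ 2)⁻¹) := by
          rw [hJldef]
          simp only [Set.indicator_of_mem (mem_closedBall_zero_iff.2 hur)]
          rw [ENNReal.ofReal_inv_of_pos (by positivity)]
        rw [hJl, ← ENNReal.ofReal_mul (by positivity)]
        apply ENNReal.ofReal_le_ofReal
        have h1 : (ω u) ^ 2 ≤ (C₂ / ‖u‖) ^ 2 := pow_le_pow_left₀ (hω0 u) (hωb u hu) 2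
        refine h1.trans (le_of_eq ?_)
        rw [div_pow]
        ring
      · have h2 : ω u = 0 := hωs u (lt_of_not_ge hur)
        rw [hWdef]
        simp [h2]
  have hWint : ∫⁻ u, W u ≤ ENNReal.ofReal (C₂ ^ 2 * (4 * π * ℓ)) := by
    refine le_trans (lintegral_mono hWle) (le_of_eq ?_)
    rw [lintegral_const_mul' _ _ ENNReal.ofReal_ne_top, hJldef,
      lintegral_indicator_inv_sq ℓ hℓ.le, ← ENNReal.ofReal_mul (by positivity)]
  -- Step 6: bound on ∫ H
  have hHint : ∫⁻ z, H z
      ≤ ENNReal.ofReal (4 * M ^ 2) * ∫⁻ z, ENNReal.ofReal (‖φN z - φ z‖ ^ 2) := by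
    have hae : ∀ᵐ z : E3, H z
        ≤ ENNReal.ofReal (4 * M ^ 2) * ENNReal.ofReal (‖φN z - φ z‖ ^ 2) := by
      filter_upwards [hφNbdd, hφbdd] with z h1 h2
      rw [hHdef, ← ENNReal.ofReal_mul (by positivity)]
      apply ENNReal.ofReal_le_ofReal
      have h3 : ‖φN z + φ z‖ ≤ 2 * M := (norm_add_le _ _).trans (by linarith)
      have h4 : ‖φN z + φ z‖ ^ 2 ≤ 4 * M ^ 2 := by nlinarith [norm_nonneg (φN z + φ z)]
      exact mul_le_mul_of_nonneg_right h4 (by positivity)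
    exact (lintegral_mono_ae hae).trans_eq
      (lintegral_const_mul' _ _ ENNReal.ofReal_ne_top)
  -- Step 7: identification of the Bochner integrals
  have hint4 : Integrable (fun z : E3 => ‖φN z‖ ^ 4) volume := by
    have h := hφN4.integrable_norm_rpow (by norm_num) (by norm_num)
    simp only [ENNReal.toReal_ofNat] at h
    have : (fun z : E3 => ‖φN z‖ ^ (4:ℝ)) = fun z : E3 => ‖φN z‖ ^ (4:ℕ) := by
      funext z
      rw [show (4:ℝ) = ((4:ℕ):ℝ) by norm_num, Real.rpow_natCast]
    rwa [this] at h
  have hint2 : Integrable (fun z : E3 => ‖φN z - φ z‖ ^ 2) volume := by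
    have h := hφd.integrable_norm_rpow (by norm_num) (by norm_num)
    simp only [ENNReal.toReal_ofNat] at h
    have : (fun z : E3 => ‖φN z - φ z‖ ^ (2:ℝ)) = fun z : E3 => ‖φN z - φ z‖ ^ (2:ℕ) := by
      funext z
      rw [show (2:ℝ) = ((2:ℕ):ℝ) by norm_num, Real.rpow_natCast]
    rwa [this] at h
  have hI4 : ∫⁻ z, G z = ENNReal.ofReal (∫ z : E3, ‖φN z‖ ^ 4) := by
    rw [ofReal_integral_eq_lintegral_ofReal hint4 (Filter.Eventually.of_forall fun z => by positivity)]
  have hI2 : ∫⁻ z : E3, ENNReal.ofReal (‖φN z - φ z‖ ^ 2)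
      = ENNReal.ofReal (∫ z : E3, ‖φN z - φ z‖ ^ 2) := by
    rw [ofReal_integral_eq_lintegral_ofReal hint2 (Filter.Eventually.of_forall fun z => by positivity)]
  have hI40 : 0 ≤ ∫ z : E3, ‖φN z‖ ^ 4 := integral_nonneg fun z => by positivity
  have hI20 : 0 ≤ ∫ z : E3, ‖φN z - φ z‖ ^ 2 := integral_nonneg fun z => by positivity
  -- Step 8: assembly
  rw [hchange]
  refine le_trans (lintegral_mono hpt) ?_
  rw [hprod, hI4]
  rw [hI2] at hHint
  calc 2 * ((∫⁻ u, D u) * ENNReal.ofReal (∫ z : E3, ‖φN z‖ ^ 4))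
        + 2 * ((∫⁻ u, W u) * (∫⁻ z, H z))
      ≤ 2 * (ENNReal.ofReal (c₁ * (4 * π * ℓ) + 4 * C₂ ^ 2 * (4 * π * ρ))
            * ENNReal.ofReal (∫ z : E3, ‖φN z‖ ^ 4))
        + 2 * (ENNReal.ofReal (C₂ ^ 2 * (4 * π * ℓ))
            * (ENNReal.ofReal (4 * M ^ 2) * ENNReal.ofReal (∫ z : E3, ‖φN z - φ z‖ ^ 2))) := by
        gcongr
    _ = ENNReal.ofReal (2 * ((c₁ * (4 * π * ℓ) + 4 * C₂ ^ 2 * (4 * π * ρ))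
            * (∫ z : E3, ‖φN z‖ ^ 4))
          + 2 * ((C₂ ^ 2 * (4 * π * ℓ)) * ((4 * M ^ 2) * (∫ z : E3, ‖φN z - φ z‖ ^ 2)))) := by
        have hA0 : (0:ℝ) ≤ c₁ * (4 * π * ℓ) + 4 * C₂ ^ 2 * (4 * π * ρ) := by positivity
        have hB0 : (0:ℝ) ≤ C₂ ^ 2 * (4 * π * ℓ) := by positivity
        have e1 : ENNReal.ofReal (2 * ((c₁ * (4 * π * ℓ) + 4 * C₂ ^ 2 * (4 * π * ρ))
              * (∫ z : E3, ‖φN z‖ ^ 4)))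
            = 2 * (ENNReal.ofReal (c₁ * (4 * π * ℓ) + 4 * C₂ ^ 2 * (4 * π * ρ))
              * ENNReal.ofReal (∫ z : E3, ‖φN z‖ ^ 4)) := by
          rw [ENNReal.ofReal_mul (by norm_num : (0:ℝ) ≤ 2), ENNReal.ofReal_mul hA0,
            ENNReal.ofReal_ofNat]
        have e2 : ENNReal.ofReal (2 * ((C₂ ^ 2 * (4 * π * ℓ))
              * ((4 * M ^ 2) * (∫ z : E3, ‖φN z - φ z‖ ^ 2))))
            = 2 * (ENNReal.ofReal (C₂ ^ 2 * (4 * π * ℓ))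
              * (ENNReal.ofReal (4 * M ^ 2) * ENNReal.ofReal (∫ z : E3, ‖φN z - φ z‖ ^ 2))) := by
          rw [ENNReal.ofReal_mul (by norm_num : (0:ℝ) ≤ 2), ENNReal.ofReal_mul hB0,
            ENNReal.ofReal_mul (by positivity : (0:ℝ) ≤ 4 * M ^ 2), ENNReal.ofReal_ofNat]
        conv_rhs => rw [ENNReal.ofReal_add (by positivity) (by positivity)]
        rw [e1, e2]
    _ ≤ _ := by
        apply ENNReal.ofReal_le_ofReal
        apply le_of_eq
        rw [hc₁def, hρdef]
        ring
end
end

section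
/- Let b₀ > 0, ℓ > 0, K₀ > 0 and 0 < β < 1. For λ > 0 define f_λ(x) := sin(√λ(|x|−ℓ))/(√λ |x|) + ℓ cos(√λ(|x|−ℓ))/|x| for x ≠ 0, and define ω^{asymp}(x) := (b₀/8π)( 1/|x| − 3/(2ℓ) + |x|²/(2ℓ³) ). Then there exist constants C > 0 and N₀ ≥ 1 such that for every N ≥ N₀ and every λ > 0 with |λ − 3b₀/(8πNℓ³)| ≤ K₀ N^{−(2−β)}, one has |N(1 − f_λ(x)) − ω^{asymp}(x)| ≤ C N^{−(1−β)} / |x| for all x with 0 < |x| ≤ ℓ. -/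
open MeasureTheory Real
open scoped ENNReal

noncomputable section

lemma cos_quartic (x : ℝ) (hx : |x| ≤ 1) :
    |Real.cos x - (1 - x^2/2)| ≤ |x|^4 * (5/96) := Real.cos_bound hx

lemma sin_quintic (x : ℝ) (hx : |x| ≤ 1) :
    |Real.sin x - (x - x^3/6)| ≤ |x|^5 * (5/96) := by
  have hconv : Convex ℝ (Set.Icc (-|x|) (|x|)) := convex_Icc _ _
  have hderiv : ∀ t ∈ Set.Icc (-|x|) (|x|),
      HasDerivWithinAt (fun t : ℝ => Real.sin t - (t - t^3/6))
        ((fun t : ℝ => Real.cos t - (1 - t^2/2)) t) (Set.Icc (-|x|) (|x|)) t := by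
    intro t ht
    have h2 : HasDerivAt (fun t : ℝ => t - t^3/6) (1 - 3*t^2/6) t := by
      simpa using ((hasDerivAt_id' t).fun_sub ((hasDerivAt_pow 3 t).div_const 6))
    have : HasDerivAt (fun t : ℝ => Real.sin t - (t - t^3/6))
        (Real.cos t - (1 - t^2/2)) t := by
      exact ((Real.hasDerivAt_sin t).fun_sub h2).congr_deriv (by ring)
    exact this.hasDerivWithinAt
  have hbound : ∀ t ∈ Set.Icc (-|x|) (|x|),
      ‖(fun t : ℝ => Real.cos t - (1 - t^2/2)) t‖ ≤ |x|^4 * (5/96) := by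
    intro t ht
    have h1 : |t| ≤ |x| := abs_le.2 ⟨ht.1, ht.2⟩
    calc ‖Real.cos t - (1 - t^2/2)‖ ≤ |t|^4 * (5/96) := Real.cos_bound (h1.trans hx)
      _ ≤ |x|^4 * (5/96) := by gcongr
  have h0 : (0:ℝ) ∈ Set.Icc (-|x|) (|x|) := ⟨neg_nonpos.2 (abs_nonneg x), abs_nonneg x⟩
  have hxm : x ∈ Set.Icc (-|x|) (|x|) := ⟨neg_abs_le x, le_abs_self x⟩
  have key := hconv.norm_image_sub_le_of_norm_hasDerivWithin_le hderiv hbound h0 hxm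
  simp only [Real.sin_zero] at key
  norm_num at key
  calc |Real.sin x - (x - x^3/6)| ≤ |x|^4 * (5/96) * |x| := key
    _ = |x|^5 * (5/96) := by ring

lemma key_identity (s r ℓ b₀ N : ℝ) (hs : s ≠ 0) (hr : r ≠ 0) (hl : ℓ ≠ 0) :
    N * (1 - (Real.sin (s*(r-ℓ)) / (s*r) + ℓ * Real.cos (s*(r-ℓ)) / r))
      - (b₀/(8*π)) * (1/r - 3/(2*ℓ) + r^2/(2*ℓ^3))
    = ((N*s^2 - 3*b₀/(8*π*ℓ^3)) * (2*ℓ^3 - 3*ℓ^2*r + r^3)/6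
       - N*(Real.sin (s*(r-ℓ)) - (s*(r-ℓ) - (s*(r-ℓ))^3/6))/s
       - N*ℓ*(Real.cos (s*(r-ℓ)) - (1 - (s*(r-ℓ))^2/2))) / r := by
  have hπ : (π:ℝ) ≠ 0 := Real.pi_ne_zero
  field_simp
  ring

lemma poly_bound {r ℓ : ℝ} (h0 : 0 < r) (h1 : r ≤ ℓ) :
    |2*ℓ^3 - 3*ℓ^2*r + r^3| ≤ 3*ℓ^3 := by
  have hl0 : 0 < ℓ := lt_of_lt_of_le h0 h1
  have h3 : r^3 ≤ ℓ^3 := pow_le_pow_left₀ h0.le h1 3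
  have h4 : 0 ≤ (ℓ - r)^2 * (r + 2*ℓ) :=
    mul_nonneg (sq_nonneg _) (by linarith)
  have h5 : 0 ≤ ℓ^2 * r := mul_nonneg (sq_nonneg _) h0.le
  rw [abs_le]; constructor <;> nlinarith [pow_pos hl0 3]

lemma le_one_of_sq {t : ℝ} (h0 : 0 ≤ t) (h1 : t^2 ≤ 1) : t ≤ 1 := by nlinarith

lemma fin_aux {a b X : ℝ} (hX : 0 < X) (ha : 0 ≤ a) (hb : 0 ≤ b) :
    a*X + b*X + b*X ≤ (a + 2*b + 1)*X := by nlinarith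


/-- Convergence `N(1 − f_λ) → ω^{asymp}` for the explicit radial Neumann solution
`f_λ(x) = sin(√λ(|x|−ℓ))/(√λ|x|) + ℓcos(√λ(|x|−ℓ))/|x|` with rate `N^{−(1−β)}/|x|`,
when `|λ − 3b₀/(8πNℓ³)| ≤ K₀N^{−(2−β)}`. -/
theorem stmt14 (b₀ ℓ K₀ β : ℝ) (hb₀ : 0 < b₀) (hℓ : 0 < ℓ) (hK₀ : 0 < K₀)
    (hβ0 : 0 < β) (hβ1 : β < 1) :
    ∃ C : ℝ, 0 < C ∧ ∃ N₀ : ℝ, 1 ≤ N₀ ∧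
      ∀ N : ℝ, N₀ ≤ N → ∀ lam : ℝ, 0 < lam →
        |lam - 3 * b₀ / (8 * π * N * ℓ ^ 3)| ≤ K₀ * N ^ (-(2 - β)) →
        ∀ x : E3, 0 < ‖x‖ → ‖x‖ ≤ ℓ →
          |N * (1 - (Real.sin (Real.sqrt lam * (‖x‖ - ℓ)) / (Real.sqrt lam * ‖x‖)
                + ℓ * Real.cos (Real.sqrt lam * (‖x‖ - ℓ)) / ‖x‖))
            - (b₀ / (8 * π)) * (1 / ‖x‖ - 3 / (2 * ℓ) + ‖x‖ ^ 2 / (2 * ℓ ^ 3))|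
          ≤ C * N ^ (-(1 - β)) / ‖x‖ := by
  have hπ : (0:ℝ) < π := Real.pi_pos
  set A : ℝ := 3*b₀/(8*π*ℓ^3) with hA
  have hA0 : 0 < A := by positivity
  set C₁ : ℝ := A + K₀ with hC₁def
  have hC₁ : 0 < C₁ := by positivity
  refine ⟨K₀*ℓ^3/2 + (10/96)*ℓ^5*C₁^2 + 1, by positivity, max 1 (C₁*ℓ^2),
    le_max_left _ _, ?_⟩
  intro N hN lam hlam hcl x hx hxl
  set r : ℝ := ‖x‖ with hrdef
  clear_value r
  clear hrdef x
  have hN1 : (1:ℝ) ≤ N := le_trans (le_max_left _ _) hN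
  have hN0 : (0:ℝ) < N := lt_of_lt_of_le one_pos hN1
  have hNC : C₁*ℓ^2 ≤ N := le_trans (le_max_right _ _) hN
  have hexp1 : -(2 - β) = β - 2 := by ring
  rw [hexp1] at hcl
  have hrp1 : N ^ (β-2:ℝ) ≤ N ^ ((-1):ℝ) :=
    Real.rpow_le_rpow_of_exponent_le hN1 (by linarith)
  have hrpinv : N ^ ((-1):ℝ) = 1/N := by
    rw [Real.rpow_neg_one, one_div]
  have hAdiv : 3 * b₀ / (8 * π * N * ℓ ^ 3) = A/N := by
    rw [hA]; field_simp
  have hlamle : lam ≤ C₁ / N := by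
    have h1 := (abs_le.mp hcl).2
    rw [hAdiv] at h1
    have h2 : K₀ * N ^ (β-2:ℝ) ≤ K₀ * (1/N) := by
      rw [← hrpinv]; exact mul_le_mul_of_nonneg_left hrp1 hK₀.le
    have h3 : lam ≤ A/N + K₀ * (1/N) := by linarith
    have h4 : A/N + K₀ * (1/N) = C₁/N := by rw [hC₁def]; ring
    linarith
  have hrpmul : N ^ (β-2:ℝ) * N = N ^ (β-1:ℝ) := by
    rw [← Real.rpow_add_one hN0.ne' (β-2)]; ring_nf
  have hNlamA : |N*lam - A| ≤ K₀ * N ^ (β-1:ℝ) := by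
    have heq : N*lam - A = N * (lam - 3 * b₀ / (8 * π * N * ℓ ^ 3)) := by
      rw [hAdiv]; field_simp
    rw [heq, abs_mul, abs_of_pos hN0]
    calc N * |lam - 3 * b₀ / (8 * π * N * ℓ ^ 3)| ≤ N * (K₀ * N ^ (β-2:ℝ)) :=
          mul_le_mul_of_nonneg_left hcl hN0.le
      _ = K₀ * (N ^ (β-2:ℝ) * N) := by ring
      _ = K₀ * N ^ (β-1:ℝ) := by rw [hrpmul]
  have hrp2 : N ^ ((-1):ℝ) ≤ N ^ (β-1:ℝ) :=
    Real.rpow_le_rpow_of_exponent_le hN1 (by linarith)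
  have hNlam2 : N * lam^2 ≤ C₁^2 * N ^ (β-1:ℝ) := by
    have h2 : lam^2 ≤ (C₁/N)^2 := pow_le_pow_left₀ hlam.le hlamle 2
    have h3 : N * lam^2 ≤ N * (C₁/N)^2 := mul_le_mul_of_nonneg_left h2 hN0.le
    have h4 : N * (C₁/N)^2 = C₁^2 * (1/N) := by field_simp
    have h5 : C₁^2 * (1/N) ≤ C₁^2 * N ^ (β-1:ℝ) := by
      rw [← hrpinv]; exact mul_le_mul_of_nonneg_left hrp2 (by positivity)
    exact (h3.trans_eq h4).trans h5
  set s : ℝ := Real.sqrt lam with hsdef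
  have hs0 : 0 < s := Real.sqrt_pos.mpr hlam
  have hs2 : s^2 = lam := Real.sq_sqrt hlam.le
  clear_value s
  have hsl : s * ℓ ≤ 1 := by
    have hll : lam * ℓ^2 ≤ 1 := by
      have h2 : C₁/N * ℓ^2 ≤ 1 := by
        rw [div_mul_eq_mul_div, div_le_one hN0]; exact hNC
      have h3 : lam * ℓ^2 ≤ C₁/N * ℓ^2 :=
        mul_le_mul_of_nonneg_right hlamle (by positivity)
      linarith
    have hsq : (s*ℓ)^2 ≤ 1 := by rw [mul_pow, hs2]; exact hll
    exact le_one_of_sq (mul_nonneg hs0.le hℓ.le) hsq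
  rw [key_identity s r ℓ b₀ N hs0.ne' hx.ne' hℓ.ne', abs_div, abs_of_pos hx]
  have hexp2 : -(1 - β) = β - 1 := by ring
  rw [hexp2, hs2]
  gcongr
  rw [← hA]
  set u : ℝ := s * (r - ℓ) with hudef
  have huabs : |u| ≤ s * ℓ := by
    rw [hudef, abs_mul, abs_of_pos hs0, abs_of_nonpos (by linarith : r - ℓ ≤ 0)]
    have h1 : s * -(r - ℓ) ≤ s * ℓ :=
      mul_le_mul_of_nonneg_left (by linarith) hs0.le
    linarith
  have hu1 : |u| ≤ 1 := le_trans huabs hsl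
  have tri : ∀ a b c : ℝ, |a - b - c| ≤ |a| + |b| + |c| := by
    intro a b c
    calc |a - b - c| = |a + -b + -c| := by ring_nf
      _ ≤ |a| + |(-b)| + |(-c)| := abs_add_three _ _ _
      _ = |a| + |b| + |c| := by rw [abs_neg, abs_neg]
  refine le_trans (tri _ _ _) ?_
  have hpoly : |2*ℓ^3 - 3*ℓ^2*r + r^3| ≤ 3*ℓ^3 := poly_bound hx hxl
  have hNp : (0:ℝ) < N ^ (β-1:ℝ) := Real.rpow_pos_of_pos hN0 _
  have hb1 : |(N*lam - A) * (2*ℓ^3 - 3*ℓ^2*r + r^3)/6| ≤ K₀*ℓ^3/2 * N ^ (β-1:ℝ) := by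
    rw [abs_div, abs_mul]
    have h1 : |N*lam - A| * |2*ℓ^3 - 3*ℓ^2*r + r^3| ≤ (K₀ * N ^ (β-1:ℝ)) * (3*ℓ^3) :=
      mul_le_mul hNlamA hpoly (abs_nonneg _) (by positivity)
    have h2 : |(6:ℝ)| = 6 := by norm_num
    rw [h2]
    linarith
  have hupow5 : |u|^5 ≤ s^5 * ℓ^5 := by
    calc |u|^5 ≤ (s*ℓ)^5 := pow_le_pow_left₀ (abs_nonneg u) huabs 5
      _ = s^5 * ℓ^5 := by ring
  have hupow4 : |u|^4 ≤ s^4 * ℓ^4 := by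
    calc |u|^4 ≤ (s*ℓ)^4 := pow_le_pow_left₀ (abs_nonneg u) huabs 4
      _ = s^4 * ℓ^4 := by ring
  have hs4 : s^4 = lam^2 := by rw [← hs2]; ring
  have hb2 : |N*(Real.sin u - (u - u^3/6))/s| ≤ (5/96)*ℓ^5*C₁^2 * N ^ (β-1:ℝ) := by
    rw [abs_div, abs_mul, abs_of_pos hN0, abs_of_pos hs0, div_le_iff₀ hs0]
    have hsin := sin_quintic u hu1
    calc N * |Real.sin u - (u - u^3/6)| ≤ N * (|u|^5 * (5/96)) :=
          mul_le_mul_of_nonneg_left hsin hN0.le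
      _ ≤ N * (s^5 * ℓ^5 * (5/96)) :=
          mul_le_mul_of_nonneg_left
            (mul_le_mul_of_nonneg_right hupow5 (by norm_num)) hN0.le
      _ = (5/96) * ℓ^5 * (N * lam^2) * s := by
          rw [show s^5 = s^4 * s by ring, hs4]; ring
      _ ≤ (5/96) * ℓ^5 * (C₁^2 * N ^ (β-1:ℝ)) * s :=
          mul_le_mul_of_nonneg_right
            (mul_le_mul_of_nonneg_left hNlam2 (by positivity)) hs0.le
      _ = (5/96)*ℓ^5*C₁^2 * N ^ (β-1:ℝ) * s := by ring
  have hb3 : |N*ℓ*(Real.cos u - (1 - u^2/2))| ≤ (5/96)*ℓ^5*C₁^2 * N ^ (β-1:ℝ) := by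
    rw [abs_mul, abs_mul, abs_of_pos hN0, abs_of_pos hℓ]
    have hcos := Real.cos_bound hu1
    calc N * ℓ * |Real.cos u - (1 - u^2/2)| ≤ N * ℓ * (|u|^4 * (5/96)) :=
          mul_le_mul_of_nonneg_left hcos (by positivity)
      _ ≤ N * ℓ * (s^4 * ℓ^4 * (5/96)) :=
          mul_le_mul_of_nonneg_left
            (mul_le_mul_of_nonneg_right hupow4 (by norm_num)) (by positivity)
      _ = (5/96) * ℓ^5 * (N * lam^2) := by rw [hs4]; ring
      _ ≤ (5/96) * ℓ^5 * (C₁^2 * N ^ (β-1:ℝ)) :=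
          mul_le_mul_of_nonneg_left hNlam2 (by positivity)
      _ = (5/96)*ℓ^5*C₁^2 * N ^ (β-1:ℝ) := by ring
  have hfin := fin_aux (a := K₀*ℓ^3/2) (b := (5/96)*ℓ^5*C₁^2) hNp
    (by positivity) (by positivity)
  have he : (K₀*ℓ^3/2 + 2*((5/96)*ℓ^5*C₁^2) + 1) * N ^ (β-1:ℝ)
      = (K₀*ℓ^3/2 + (10/96)*ℓ^5*C₁^2 + 1) * N ^ (β-1:ℝ) := by ring
  linarith
end
end

section
/- Let β > 0, N ≥ 1, C₂ > 0, L > 0. Let V ∈ L¹(ℝ³) be nonnegative, let ω : ℝ³ → ℝ be measurable with 0 ≤ N ω(x) ≤ C₂/|x| for all x ≠ 0, and let φ : ℝ³ → ℂ be bounded, Lipschitz with Lipschitz constant L, and in L²(ℝ³). Define F(x) := ∫_{ℝ³} N^{3β} V(N^{β}(x−y)) ω(x−y) φ(y) ( φ(y)φ(x) − φ((x+y)/2)² ) dy. Then F ∈ L²(ℝ³) and ‖F‖_{L²(ℝ³)} ≤ C₂ L ‖φ‖_{L^∞} ‖φ‖_{L²} ‖V‖_{L¹} / N. -/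
open MeasureTheory Real
open scoped ENNReal

noncomputable section

theorem young_aux (g : E3 → ℝ) (hgint : Integrable g (volume : Measure E3)) (hg0 : ∀ z, 0 ≤ g z)
    (φ : E3 → ℂ) (hφc : Continuous φ) (hφ2 : MemLp φ 2 (volume : Measure E3))
    (c : ℝ) (hc0 : 0 ≤ c) (f : E3 → E3 → ℂ)
    (hfm : AEStronglyMeasurable (fun p : E3 × E3 => f p.1 p.2)
      ((volume : Measure E3).prod volume))
    (hfb : ∀ x y, ‖f x y‖ ≤ c * (g (x - y) * ‖φ y‖)) :
    MemLp (fun x => ∫ y, f x y) 2 (volume : Measure E3) ∧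
      ∫ x, ‖∫ y, f x y‖ ^ 2 ≤ (c * ∫ z, g z) ^ 2 * ∫ y, ‖φ y‖ ^ 2 := by
  have hFm : AEStronglyMeasurable (fun x => ∫ y, f x y) (volume : Measure E3) :=
    hfm.integral_prod_right'
  set G : E3 → ℝ≥0∞ := fun z => ENNReal.ofReal (g z) with hGdef
  have hGm : AEMeasurable G volume := ENNReal.measurable_ofReal.comp_aemeasurable hgint.aemeasurable
  set H : E3 → ℝ≥0∞ := fun y => (‖φ y‖₊ : ℝ≥0∞) with hHdef
  have hHm : Measurable H := measurable_enorm.comp hφc.measurable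
  have hHtop : ∀ y, H y ^ 2 ≠ ⊤ := fun y => ENNReal.pow_ne_top ENNReal.coe_ne_top
  have hsub : Measure.QuasiMeasurePreserving (fun p : E3 × E3 => p.1 - p.2)
      ((volume : Measure E3).prod volume) volume := quasiMeasurePreserving_sub volume volume
  set IG : ℝ≥0∞ := ∫⁻ z, G z with hIGdef
  have hIG : IG = ENNReal.ofReal (∫ z, g z) :=
    (ofReal_integral_eq_lintegral_ofReal hgint (Filter.Eventually.of_forall hg0)).symm
  have hIGtop : IG ≠ ⊤ := by rw [hIG]; exact ENNReal.ofReal_ne_top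
  have hφsq : Integrable (fun y => ‖φ y‖ ^ 2) (volume : Measure E3) := by
    have h := hφ2.integrable_norm_rpow two_ne_zero ENNReal.ofNat_ne_top
    simpa [ENNReal.toReal_ofNat, Real.rpow_natCast] using h
  have hIφ : ∫⁻ y, H y ^ 2 = ENNReal.ofReal (∫ y, ‖φ y‖ ^ 2) := by
    rw [ofReal_integral_eq_lintegral_ofReal hφsq
      (Filter.Eventually.of_forall fun y => sq_nonneg _)]
    refine lintegral_congr fun y => ?_
    rw [ENNReal.ofReal_pow (norm_nonneg _), ofReal_norm, enorm_eq_nnnorm]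
  set Conv : E3 → ℝ≥0∞ := fun x => ∫⁻ y, G (x - y) * H y with hConvdef
  have hFb : ∀ x : E3, (‖∫ y, f x y‖₊ : ℝ≥0∞) ≤ ENNReal.ofReal c * Conv x := by
    intro x
    calc (‖∫ y, f x y‖₊ : ℝ≥0∞) ≤ ∫⁻ y, (‖f x y‖₊ : ℝ≥0∞) :=
        enorm_integral_le_lintegral_enorm _
    _ ≤ ∫⁻ y, ENNReal.ofReal c * (G (x - y) * H y) := by
        refine lintegral_mono fun y => ?_
        rw [← enorm_eq_nnnorm, ← ofReal_norm]
        calc ENNReal.ofReal ‖f x y‖ ≤ ENNReal.ofReal (c * (g (x - y) * ‖φ y‖)) :=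
            ENNReal.ofReal_le_ofReal (hfb x y)
        _ = ENNReal.ofReal c * (G (x - y) * H y) := by
            rw [ENNReal.ofReal_mul hc0, ENNReal.ofReal_mul (hg0 _), ofReal_norm, enorm_eq_nnnorm]
    _ = ENNReal.ofReal c * Conv x := lintegral_const_mul' _ _ ENNReal.ofReal_ne_top
  have hCS : ∀ x : E3, Conv x ^ 2 ≤ IG * ∫⁻ y, G (x - y) * H y ^ 2 := by
    intro x
    have hGx : AEMeasurable (fun y => G (x - y)) volume :=
      hGm.comp_quasiMeasurePreserving
        (Measure.measurePreserving_sub_left volume x).quasiMeasurePreserving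
    have h22 : Real.HolderConjugate 2 2 := Real.HolderConjugate.two_two
    have hCS0 := ENNReal.lintegral_mul_le_Lp_mul_Lq (volume : Measure E3) h22
      (f := fun y => G (x - y) ^ ((2:ℝ)⁻¹)) (g := fun y => G (x - y) ^ ((2:ℝ)⁻¹) * H y)
      (hGx.pow_const _) ((hGx.pow_const _).mul hHm.aemeasurable)
    have hsqrt : ∀ a : ℝ≥0∞, (a ^ ((2:ℝ)⁻¹)) ^ (2:ℝ) = a := by
      intro a; rw [← ENNReal.rpow_mul]; norm_num
    have hsq2 : ∀ a : ℝ≥0∞, (a ^ ((2:ℝ)⁻¹)) ^ (2:ℕ) = a := by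
      intro a; rw [← ENNReal.rpow_natCast (a ^ ((2:ℝ)⁻¹)) 2, ← ENNReal.rpow_mul]; norm_num
    have hkey : Conv x ≤ IG ^ ((2:ℝ)⁻¹) * (∫⁻ y, G (x - y) * H y ^ 2) ^ ((2:ℝ)⁻¹) := by
      have e1 : ∫⁻ (a : E3), ((fun y => G (x - y) ^ ((2:ℝ)⁻¹)) *
          (fun y => G (x - y) ^ ((2:ℝ)⁻¹) * H y)) a = Conv x := by
        refine lintegral_congr fun y => ?_
        simp only [Pi.mul_apply]
        rw [← mul_assoc, ← pow_two, hsq2]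
      have e2 : ∫⁻ y, (G (x - y) ^ ((2:ℝ)⁻¹)) ^ (2:ℝ) = IG := by
        calc ∫⁻ y, (G (x - y) ^ ((2:ℝ)⁻¹)) ^ (2:ℝ) = ∫⁻ y, G (x - y) := by
              refine lintegral_congr fun y => hsqrt _
        _ = IG := (Measure.measurePreserving_sub_left volume x).lintegral_comp_emb
              (MeasurableEquiv.subLeft x).measurableEmbedding G
      have e3 : ∫⁻ y, (G (x - y) ^ ((2:ℝ)⁻¹) * H y) ^ (2:ℝ) = ∫⁻ y, G (x - y) * H y ^ 2 := by
        refine lintegral_congr fun y => ?_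
        rw [ENNReal.mul_rpow_of_nonneg _ _ (by norm_num : (0:ℝ) ≤ 2), hsqrt]
        congr 1
        rw [← ENNReal.rpow_natCast (H y) 2]
        norm_num
      have := hCS0
      rw [e1] at this
      calc Conv x ≤ (∫⁻ y, (G (x - y) ^ ((2:ℝ)⁻¹)) ^ (2:ℝ)) ^ (1/(2:ℝ)) *
            (∫⁻ y, (G (x - y) ^ ((2:ℝ)⁻¹) * H y) ^ (2:ℝ)) ^ (1/(2:ℝ)) := this
      _ = IG ^ ((2:ℝ)⁻¹) * (∫⁻ y, G (x - y) * H y ^ 2) ^ ((2:ℝ)⁻¹) := by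
          rw [e2, e3, one_div]
    calc Conv x ^ 2 ≤ (IG ^ ((2:ℝ)⁻¹) * (∫⁻ y, G (x - y) * H y ^ 2) ^ ((2:ℝ)⁻¹)) ^ 2 := by
          gcongr
    _ = IG * ∫⁻ y, G (x - y) * H y ^ 2 := by
        rw [mul_pow, hsq2, hsq2]
  set J : ℝ≥0∞ := ∫⁻ x, (‖∫ y, f x y‖₊ : ℝ≥0∞) ^ 2 with hJdef
  have hswapm : AEMeasurable (fun p : E3 × E3 => G (p.1 - p.2) * H p.2 ^ 2)
      ((volume : Measure E3).prod volume) :=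
    (hGm.comp_quasiMeasurePreserving hsub).mul
      (((hHm.comp measurable_snd).pow_const 2).aemeasurable)
  have hJle : J ≤ ENNReal.ofReal c ^ 2 * (IG ^ 2 * ENNReal.ofReal (∫ y, ‖φ y‖ ^ 2)) := by
    calc J ≤ ∫⁻ x, (ENNReal.ofReal c * Conv x) ^ 2 := by
          refine lintegral_mono fun x => ?_
          gcongr
          exact hFb x
    _ = ENNReal.ofReal c ^ 2 * ∫⁻ x, Conv x ^ 2 := by
        simp_rw [mul_pow]
        exact lintegral_const_mul' _ _ (ENNReal.pow_ne_top ENNReal.ofReal_ne_top)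
    _ ≤ ENNReal.ofReal c ^ 2 * ∫⁻ x, IG * ∫⁻ y, G (x - y) * H y ^ 2 := by
        exact mul_le_mul_right (lintegral_mono hCS) _
    _ = ENNReal.ofReal c ^ 2 * (IG * ∫⁻ x, ∫⁻ y, G (x - y) * H y ^ 2) := by
        rw [lintegral_const_mul' IG _ hIGtop]
    _ = ENNReal.ofReal c ^ 2 * (IG * ∫⁻ y, ∫⁻ x, G (x - y) * H y ^ 2) := by
        rw [lintegral_lintegral_swap hswapm]
    _ = ENNReal.ofReal c ^ 2 * (IG * ∫⁻ y, H y ^ 2 * IG) := by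
        congr 2
        refine lintegral_congr fun y => ?_
        rw [lintegral_mul_const' _ _ (hHtop y), lintegral_sub_right_eq_self G y, mul_comm]
    _ = ENNReal.ofReal c ^ 2 * (IG ^ 2 * ENNReal.ofReal (∫ y, ‖φ y‖ ^ 2)) := by
        rw [lintegral_mul_const' _ _ hIGtop, hIφ]
        ring
  have hg0' : 0 ≤ ∫ z, g z := integral_nonneg hg0
  have hφ0' : 0 ≤ ∫ y, ‖φ y‖ ^ 2 := integral_nonneg fun y => sq_nonneg _
  have hRHS : ENNReal.ofReal c ^ 2 * (IG ^ 2 * ENNReal.ofReal (∫ y, ‖φ y‖ ^ 2)) =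
      ENNReal.ofReal ((c * ∫ z, g z) ^ 2 * ∫ y, ‖φ y‖ ^ 2) := by
    rw [ENNReal.ofReal_mul (sq_nonneg _), ENNReal.ofReal_pow (mul_nonneg hc0 hg0'),
      ENNReal.ofReal_mul hc0, hIG]
    ring
  have hJle' : J ≤ ENNReal.ofReal ((c * ∫ z, g z) ^ 2 * ∫ y, ‖φ y‖ ^ 2) := hRHS ▸ hJle
  have hJtop : J ≠ ⊤ := (lt_of_le_of_lt hJle' ENNReal.ofReal_lt_top).ne
  have hmem : MemLp (fun x => ∫ y, f x y) 2 (volume : Measure E3) := by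
    refine ⟨hFm, ?_⟩
    rw [eLpNorm_eq_lintegral_rpow_enorm_toReal two_ne_zero ENNReal.ofNat_ne_top]
    simp only [enorm_eq_nnnorm]
    refine ENNReal.rpow_lt_top_of_nonneg (by norm_num) ?_
    have : ∫⁻ x, (‖∫ y, f x y‖₊ : ℝ≥0∞) ^ (2:ℝ≥0∞).toReal = J := by
      refine lintegral_congr fun x => ?_
      rw [ENNReal.toReal_ofNat, ← ENNReal.rpow_natCast (‖∫ y, f x y‖₊ : ℝ≥0∞) 2]
      norm_num
    rw [this]
    exact hJtop
  refine ⟨hmem, ?_⟩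
  have hint : ∫ x, ‖∫ y, f x y‖ ^ 2 = J.toReal := by
    rw [integral_eq_lintegral_of_nonneg_ae (Filter.Eventually.of_forall fun x => sq_nonneg _)
      ((hFm.norm.aemeasurable.pow_const 2).aestronglyMeasurable)]
    congr 1
    refine lintegral_congr fun x => ?_
    rw [ENNReal.ofReal_pow (norm_nonneg _), ofReal_norm, enorm_eq_nnnorm]
  rw [hint]
  calc J.toReal ≤ (ENNReal.ofReal ((c * ∫ z, g z) ^ 2 * ∫ y, ‖φ y‖ ^ 2)).toReal :=
      ENNReal.toReal_mono ENNReal.ofReal_ne_top hJle'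
  _ = (c * ∫ z, g z) ^ 2 * ∫ y, ‖φ y‖ ^ 2 :=
      ENNReal.toReal_ofReal (mul_nonneg (sq_nonneg _) hφ0')

/-- Smallness of the residual linear term: with
`F(x) = ∫ N^{3β}V(N^β(x−y)) ω(x−y) φ(y)(φ(y)φ(x) − φ((x+y)/2)²) dy`, one has `F ∈ L²` and
`‖F‖₂ ≤ C₂ L ‖φ‖_∞ ‖φ‖₂ ‖V‖₁ / N`. -/
theorem stmt17 (β N C₂ L Mφ : ℝ) (hβ : 0 < β) (hN : 1 ≤ N) (hC₂ : 0 < C₂) (hL : 0 < L)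
    (V : E3 → ℝ) (hV1 : Integrable V (volume : Measure E3)) (hV0 : ∀ y, 0 ≤ V y)
    (ω : E3 → ℝ) (hωm : Measurable ω) (hω0 : ∀ x, 0 ≤ N * ω x)
    (hωb : ∀ x : E3, x ≠ 0 → N * ω x ≤ C₂ / ‖x‖)
    (φ : E3 → ℂ) (hφbdd : ∀ x, ‖φ x‖ ≤ Mφ)
    (hφLip : LipschitzWith (Real.toNNReal L) φ)
    (hφ2 : MemLp φ 2 (volume : Measure E3)) :
    MemLp (fun x : E3 => ∫ y : E3,
        ((N ^ (3 * β) * V ((N ^ β : ℝ) • (x - y)) * ω (x - y) : ℝ) : ℂ) *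
          (φ y * (φ y * φ x - φ ((2 : ℝ)⁻¹ • (x + y)) ^ 2))) 2 (volume : Measure E3) ∧
    Real.sqrt (∫ x : E3, ‖∫ y : E3,
        ((N ^ (3 * β) * V ((N ^ β : ℝ) • (x - y)) * ω (x - y) : ℝ) : ℂ) *
          (φ y * (φ y * φ x - φ ((2 : ℝ)⁻¹ • (x + y)) ^ 2))‖ ^ 2)
      ≤ C₂ * L * Mφ * Real.sqrt (∫ y : E3, ‖φ y‖ ^ 2) * (∫ y : E3, V y) / N := by
  have hN0 : (0:ℝ) < N := one_pos.trans_le hN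
  have hMφ : 0 ≤ Mφ := (norm_nonneg _).trans (hφbdd 0)
  have hφc : Continuous φ := hφLip.continuous
  have hNβ : (0:ℝ) < N ^ β := Real.rpow_pos_of_pos hN0 β
  have hω0' : ∀ z, 0 ≤ ω z := fun z => by nlinarith [hω0 z]
  set g : E3 → ℝ := fun z => N ^ (3 * β) * V ((N ^ β : ℝ) • z) with hgdef
  have hg0 : ∀ z, 0 ≤ g z := fun z =>
    mul_nonneg (Real.rpow_nonneg hN0.le _) (hV0 _)
  have hgint : Integrable g (volume : Measure E3) :=
    ((integrable_comp_smul_iff volume V hNβ.ne').mpr hV1).const_mul _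
  have hKm : AEStronglyMeasurable (fun z : E3 => g z * ω z) (volume : Measure E3) :=
    hgint.aestronglyMeasurable.mul hωm.aestronglyMeasurable
  have hsub : Measure.QuasiMeasurePreserving (fun p : E3 × E3 => p.1 - p.2)
      ((volume : Measure E3).prod volume) volume := quasiMeasurePreserving_sub volume volume
  have hfm : AEStronglyMeasurable (fun p : E3 × E3 =>
      ((N ^ (3 * β) * V ((N ^ β : ℝ) • (p.1 - p.2)) * ω (p.1 - p.2) : ℝ) : ℂ) *
        (φ p.2 * (φ p.2 * φ p.1 - φ ((2 : ℝ)⁻¹ • (p.1 + p.2)) ^ 2)))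
      ((volume : Measure E3).prod volume) := by
    refine AEStronglyMeasurable.mul ?_ ?_
    · exact Complex.continuous_ofReal.comp_aestronglyMeasurable
        (hKm.comp_quasiMeasurePreserving hsub)
    · have hc1 : Continuous fun p : E3 × E3 => φ p.1 := hφc.comp continuous_fst
      have hc2 : Continuous fun p : E3 × E3 => φ p.2 := hφc.comp continuous_snd
      have hcm : Continuous fun p : E3 × E3 => φ ((2 : ℝ)⁻¹ • (p.1 + p.2)) :=
        hφc.comp (by fun_prop)
      exact (hc2.mul ((hc2.mul hc1).sub (hcm.pow 2))).aestronglyMeasurable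
  have hLc : ((Real.toNNReal L : NNReal) : ℝ) = L := Real.coe_toNNReal L hL.le
  set c : ℝ := C₂ * L * Mφ / N with hcdef
  have hc0 : 0 ≤ c := by positivity
  have hfb : ∀ x y : E3,
      ‖((N ^ (3 * β) * V ((N ^ β : ℝ) • (x - y)) * ω (x - y) : ℝ) : ℂ) *
        (φ y * (φ y * φ x - φ ((2 : ℝ)⁻¹ • (x + y)) ^ 2))‖ ≤ c * (g (x - y) * ‖φ y‖) := by
    intro x y
    have hgz : 0 ≤ g (x - y) := hg0 _
    have hωz : 0 ≤ ω (x - y) := hω0' _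
    have hker : g (x - y) * ω (x - y) * ‖x - y‖ ≤ (C₂ / N) * g (x - y) := by
      rcases eq_or_ne (x - y) 0 with h0 | h0
      · rw [h0, norm_zero, mul_zero]
        exact mul_nonneg (div_nonneg hC₂.le hN0.le) (hg0 0)
      · have hb := hωb _ h0
        have hnz : 0 < ‖x - y‖ := norm_pos_iff.mpr h0
        have h1 : ω (x - y) * ‖x - y‖ ≤ C₂ / N := by
          rw [le_div_iff₀ hnz] at hb
          rw [le_div_iff₀ hN0]
          nlinarith
        calc g (x - y) * ω (x - y) * ‖x - y‖ = g (x - y) * (ω (x - y) * ‖x - y‖) := by ring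
        _ ≤ g (x - y) * (C₂ / N) := mul_le_mul_of_nonneg_left h1 hgz
        _ = (C₂ / N) * g (x - y) := by ring
    set m : E3 := (2 : ℝ)⁻¹ • (x + y) with hmdef
    have hhalf : ∀ u : E3, ‖u - m‖ = (2:ℝ)⁻¹ * ‖x - y‖ → ‖φ u - φ m‖ ≤ L * ((2:ℝ)⁻¹ * ‖x - y‖) := by
      intro u hu
      have h := hφLip.dist_le_mul u m
      rw [dist_eq_norm, dist_eq_norm, hLc, hu] at h
      exact h
    have hxm : ‖φ x - φ m‖ ≤ L * ((2:ℝ)⁻¹ * ‖x - y‖) := by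
      refine hhalf x ?_
      rw [hmdef, show x - (2 : ℝ)⁻¹ • (x + y) = (2:ℝ)⁻¹ • (x - y) by module, norm_smul]
      norm_num
    have hym : ‖φ y - φ m‖ ≤ L * ((2:ℝ)⁻¹ * ‖x - y‖) := by
      refine hhalf y ?_
      rw [hmdef, show y - (2 : ℝ)⁻¹ • (x + y) = -((2:ℝ)⁻¹ • (x - y)) by module, norm_neg,
        norm_smul]
      norm_num
    have hbr : ‖φ y * φ x - φ m ^ 2‖ ≤ L * Mφ * ‖x - y‖ := by
      have hid : φ y * φ x - φ m ^ 2 = φ y * (φ x - φ m) + φ m * (φ y - φ m) := by ring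
      rw [hid]
      calc ‖φ y * (φ x - φ m) + φ m * (φ y - φ m)‖
          ≤ ‖φ y * (φ x - φ m)‖ + ‖φ m * (φ y - φ m)‖ := norm_add_le _ _
        _ = ‖φ y‖ * ‖φ x - φ m‖ + ‖φ m‖ * ‖φ y - φ m‖ := by rw [norm_mul, norm_mul]
        _ ≤ Mφ * (L * ((2:ℝ)⁻¹ * ‖x - y‖)) + Mφ * (L * ((2:ℝ)⁻¹ * ‖x - y‖)) :=
            add_le_add (mul_le_mul (hφbdd y) hxm (norm_nonneg _) hMφ)
              (mul_le_mul (hφbdd m) hym (norm_nonneg _) hMφ)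
        _ = L * Mφ * ‖x - y‖ := by ring
    have hKid : (N ^ (3 * β) * V ((N ^ β : ℝ) • (x - y)) * ω (x - y) : ℝ) =
        g (x - y) * ω (x - y) := by rw [hgdef]
    rw [hKid, norm_mul, norm_mul, Complex.norm_real, Real.norm_eq_abs,
      abs_of_nonneg (mul_nonneg hgz hωz)]
    calc g (x - y) * ω (x - y) * (‖φ y‖ * ‖φ y * φ x - φ m ^ 2‖)
        ≤ g (x - y) * ω (x - y) * (‖φ y‖ * (L * Mφ * ‖x - y‖)) :=
          mul_le_mul_of_nonneg_left
            (mul_le_mul_of_nonneg_left hbr (norm_nonneg _)) (mul_nonneg hgz hωz)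
      _ = (g (x - y) * ω (x - y) * ‖x - y‖) * (L * Mφ * ‖φ y‖) := by ring
      _ ≤ ((C₂ / N) * g (x - y)) * (L * Mφ * ‖φ y‖) :=
          mul_le_mul_of_nonneg_right hker (by positivity)
      _ = c * (g (x - y) * ‖φ y‖) := by rw [hcdef]; ring
  obtain ⟨hmem, hineq⟩ := young_aux g hgint hg0 φ hφc hφ2 c hc0 _ hfm hfb
  refine ⟨hmem, ?_⟩
  have hgI : ∫ z, g z = ∫ z, V z := by
    rw [hgdef]
    simp only
    rw [integral_const_mul, Measure.integral_comp_smul_of_nonneg volume V (N ^ β) (hR := hNβ.le),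
      finrank_euclideanSpace_fin, smul_eq_mul, ← mul_assoc]
    have h3 : ((N ^ β : ℝ) ^ (3:ℕ))⁻¹ = N ^ (-(3 * β)) := by
      rw [← Real.rpow_natCast (N ^ β) 3, ← Real.rpow_mul hN0.le, ← Real.rpow_neg hN0.le]
      norm_num [mul_comm]
    rw [h3, ← Real.rpow_add hN0]
    norm_num
  have hV0' : 0 ≤ ∫ z, V z := integral_nonneg hV0
  have hφ0' : 0 ≤ ∫ y, ‖φ y‖ ^ 2 := integral_nonneg fun y => sq_nonneg _
  rw [hgI] at hineq
  calc Real.sqrt (∫ x : E3, ‖∫ y : E3,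
        ((N ^ (3 * β) * V ((N ^ β : ℝ) • (x - y)) * ω (x - y) : ℝ) : ℂ) *
          (φ y * (φ y * φ x - φ ((2 : ℝ)⁻¹ • (x + y)) ^ 2))‖ ^ 2)
      ≤ Real.sqrt ((c * ∫ z, V z) ^ 2 * ∫ y, ‖φ y‖ ^ 2) := Real.sqrt_le_sqrt hineq
    _ = (c * ∫ z, V z) * Real.sqrt (∫ y, ‖φ y‖ ^ 2) := by
        rw [Real.sqrt_mul (sq_nonneg _), Real.sqrt_sq (by positivity)]
    _ = C₂ * L * Mφ * Real.sqrt (∫ y : E3, ‖φ y‖ ^ 2) * (∫ y : E3, V y) / N := by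
        rw [hcdef]; ring
end
end
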